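/- arXiv:1705.07304 — 2 statements merged into one kernel-verified Lean document; each statement's English description precedes it below -/
import Mathlib

section
/- Let B be a connected building set on S = {1, …, n+1}. Suppose there exist I_1, I_2 ∈ B with I_1 ∩ I_2 ≠ ∅, I_1 ⊄ I_2, I_2 ⊄ I_1, I_1 ∩ I_2 ∉ B, and such that either I_1 ∪ I_2 ≠ S or |(B|_{I_1 ∩ I_2})_max| ≥ 3. Then there exist a nested set N of B, distinct elements J_1, J_2 ∈ B \ {S} such that N ∪ {J_1} and N ∪ {J_2} are both maximal nested sets of B, and integers (a_J)_{J ∈ N} satisfying e_{J_1} + e_{J_2} + Σ_{J ∈ N} a_J e_J = 0 in ℝ^n and 2 + Σ_{J ∈ N} a_J ≤ −1. -/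
/-- A building set on a nonempty finite set `S`: a finite set of nonempty subsets of `S`
closed under unions of intersecting members, and containing all singletons. -/
def IsBuilding (S : Finset ℕ) (B : Finset (Finset ℕ)) : Prop :=
  (∀ I ∈ B, I ⊆ S ∧ I.Nonempty) ∧
  (∀ I ∈ B, ∀ J ∈ B, (I ∩ J).Nonempty → I ∪ J ∈ B) ∧
  (∀ i ∈ S, ({i} : Finset ℕ) ∈ B)

/-- The set of maximal (by inclusion) elements of `B`. -/
def Bmax (B : Finset (Finset ℕ)) : Finset (Finset ℕ) :=
  B.filter (fun I => ∀ J ∈ B, I ⊆ J → I = J)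

/-- The restriction `B|_C = {I ∈ B : I ⊆ C}`. -/
def restrict (B : Finset (Finset ℕ)) (C : Finset ℕ) : Finset (Finset ℕ) :=
  B.filter (fun I => I ⊆ C)

/-- `N` is a nested set of `B`: a subset of `B \ Bmax B` whose members are pairwise
nested or disjoint, such that no union of `k ≥ 2` pairwise disjoint members lies in `B`. -/
def IsNested (B N : Finset (Finset ℕ)) : Prop :=
  N ⊆ B \ Bmax B ∧
  (∀ I ∈ N, ∀ J ∈ N, I ⊆ J ∨ J ⊆ I ∨ I ∩ J = ∅) ∧
  (∀ F ⊆ N, 2 ≤ F.card → (∀ I ∈ F, ∀ J ∈ F, I ≠ J → I ∩ J = ∅) → F.sup id ∉ B)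

/-- `N` is a maximal (by inclusion) nested set of `B`. -/
def MaxNested (B N : Finset (Finset ℕ)) : Prop :=
  IsNested B N ∧ ∀ N' : Finset (Finset ℕ), IsNested B N' → N ⊆ N' → N = N'

/-- For `S = {1, …, n+1}`: `eVec n i` is the `i`-th standard basis vector of `ℝ^n`
for `1 ≤ i ≤ n`, and `eVec n (n+1) = -e_1 - ⋯ - e_n`. -/
def eVec (n : ℕ) (i : ℕ) : Fin n → ℝ :=
  fun j => if i = (j : ℕ) + 1 then 1 else if i = n + 1 then -1 else 0

/-- `eSet n I = ∑ i ∈ I, e_i`. -/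
def eSet (n : ℕ) (I : Finset ℕ) : Fin n → ℝ := ∑ i ∈ I, eVec n i

-- ## Preliminaries

lemma mem_Bmax_iff {B : Finset (Finset ℕ)} {I : Finset ℕ} :
    I ∈ Bmax B ↔ I ∈ B ∧ ∀ J ∈ B, I ⊆ J → I = J := Finset.mem_filter

lemma mem_restrict_iff {B : Finset (Finset ℕ)} {C I : Finset ℕ} :
    I ∈ restrict B C ↔ I ∈ B ∧ I ⊆ C := Finset.mem_filter

/-- every member of a finite family extends to a maximal member -/
lemma exists_le_bmax (P : Finset (Finset ℕ)) {K : Finset ℕ} (h : K ∈ P) :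
    ∃ A ∈ Bmax P, K ⊆ A := by
  classical
  have hne : (P.filter (fun A => K ⊆ A)).Nonempty := ⟨K, by simp [h]⟩
  obtain ⟨A, hA, hmax⟩ := Finset.exists_max_image _ Finset.card hne
  rw [Finset.mem_filter] at hA
  refine ⟨A, mem_Bmax_iff.2 ⟨hA.1, ?_⟩, hA.2⟩
  intro J hJ hAJ
  have hJf : J ∈ P.filter (fun A => K ⊆ A) := by
    simp [hJ, hA.2.trans hAJ]
  exact Finset.eq_of_subset_of_card_le hAJ (hmax J hJf)

section Building
variable {S : Finset ℕ} {B : Finset (Finset ℕ)}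

lemma S_mem_B (hconn : Bmax B = {S}) : S ∈ B := by
  have : S ∈ Bmax B := by rw [hconn]; exact Finset.mem_singleton_self S
  exact (mem_Bmax_iff.1 this).1

lemma mem_B_subset (hb : IsBuilding S B) {I : Finset ℕ} (h : I ∈ B) : I ⊆ S :=
  ((hb.1 I h).1)

lemma mem_B_nonempty (hb : IsBuilding S B) {I : Finset ℕ} (h : I ∈ B) : I.Nonempty :=
  ((hb.1 I h).2)

lemma not_S_lemma (hconn : Bmax B = {S}) {K : Finset ℕ} (hK : K ∈ B) (hKS : K ≠ S) :
    K ∈ B \ Bmax B := by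
  rw [Finset.mem_sdiff, hconn]
  exact ⟨hK, by simpa using hKS⟩

lemma exists_max_restrict (hb : IsBuilding S B) {T K : Finset ℕ} (hK : K ∈ B) (hKT : K ⊆ T) :
    ∃ M ∈ Bmax (restrict B T), K ⊆ M :=
  exists_le_bmax _ (mem_restrict_iff.2 ⟨hK, hKT⟩)

lemma decomp_mem {T M : Finset ℕ} (h : M ∈ Bmax (restrict B T)) : M ∈ B ∧ M ⊆ T := by
  have := (mem_Bmax_iff.1 h).1
  exact mem_restrict_iff.1 this

lemma decomp_max {T M : Finset ℕ} (h : M ∈ Bmax (restrict B T)) :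
    ∀ J ∈ B, J ⊆ T → M ⊆ J → M = J := by
  intro J hJ hJT hMJ
  exact (mem_Bmax_iff.1 h).2 J (mem_restrict_iff.2 ⟨hJ, hJT⟩) hMJ

lemma decomp_disj (hb : IsBuilding S B) {T M M' : Finset ℕ}
    (h : M ∈ Bmax (restrict B T)) (h' : M' ∈ Bmax (restrict B T)) (hne : M ≠ M') :
    M ∩ M' = ∅ := by
  by_contra hcon
  have hint : (M ∩ M').Nonempty := Finset.nonempty_iff_ne_empty.2 hcon
  have hM := decomp_mem h
  have hM' := decomp_mem h'
  have hu : M ∪ M' ∈ B := hb.2.1 M hM.1 M' hM'.1 hint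
  have huT : M ∪ M' ⊆ T := Finset.union_subset hM.2 hM'.2
  have e1 : M = M ∪ M' := decomp_max h _ hu huT Finset.subset_union_left
  have e2 : M' = M ∪ M' := decomp_max h' _ hu huT Finset.subset_union_right
  exact hne (e1.trans e2.symm)

lemma decomp_cover (hb : IsBuilding S B) {T : Finset ℕ} (hTS : T ⊆ S) {y : ℕ} (hy : y ∈ T) :
    ∃ M ∈ Bmax (restrict B T), y ∈ M := by
  have hyB : ({y} : Finset ℕ) ∈ B := hb.2.2 y (hTS hy)
  obtain ⟨M, hM, hsub⟩ := exists_max_restrict hb hyB (by simpa using hy)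
  exact ⟨M, hM, hsub (Finset.mem_singleton_self y)⟩

-- ## The maximality criterion

/-- The key local condition at a "node" `L`. -/
def P1cond (B W : Finset (Finset ℕ)) (L : Finset ℕ) : Prop :=
  ∃ x ∈ L, (∀ K ∈ W, K ⊂ L → x ∉ K) ∧
    (∀ K ∈ B, K ⊆ L.erase x → ∃ K' ∈ W, K' ⊂ L ∧ K ⊆ K')

def GoodW (S : Finset ℕ) (B W : Finset (Finset ℕ)) : Prop :=
  (∀ K ∈ W, K ∈ B ∧ K ≠ S) ∧
  (∀ K ∈ W, ∀ L ∈ W, K ⊆ L ∨ L ⊆ K ∨ K ∩ L = ∅) ∧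
  (∀ L, (L ∈ W ∨ L = S) → P1cond B W L)

lemma exists_min_superset (W : Finset (Finset ℕ)) (S K : Finset ℕ) (pr : Finset ℕ → Prop)
    [DecidablePred pr] (hS : pr S) :
    ∃ L, (L ∈ W ∨ L = S) ∧ pr L ∧ ∀ L', (L' ∈ W ∨ L' = S) → pr L' → ¬ L' ⊂ L := by
  classical
  have hne : ((insert S W).filter pr).Nonempty := ⟨S, by simp [hS]⟩
  obtain ⟨L, hL, hmin⟩ := Finset.exists_min_image _ Finset.card hne
  rw [Finset.mem_filter, Finset.mem_insert] at hL
  refine ⟨L, Or.symm hL.1, hL.2, ?_⟩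
  intro L' hL' hprL' hss
  have : L' ∈ (insert S W).filter pr := by
    rw [Finset.mem_filter, Finset.mem_insert]; tauto
  have := hmin L' this
  exact absurd (Finset.card_lt_card hss) (by omega)

lemma goodW_isNested (hb : IsBuilding S B) (hconn : Bmax B = {S})
    (hW : GoodW S B W) : IsNested B W := by
  classical
  obtain ⟨hWB, hcompat, hP1⟩ := hW
  refine ⟨fun K hK => not_S_lemma hconn (hWB K hK).1 (hWB K hK).2, hcompat, ?_⟩
  intro F hFW h2 hdisj hsupB
  set K := F.sup id with hKdef
  have hKS : K ⊆ S := Finset.sup_le (fun M hM => mem_B_subset hb ((hWB M (hFW hM)).1))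
  -- minimal L ∈ W ∪ {S} with K ⊆ L
  obtain ⟨L, hLmem, hKL, hmin⟩ := exists_min_superset W S K (fun L => K ⊆ L) hKS
  obtain ⟨x, hxL, hx1, hx2⟩ := hP1 L hLmem
  -- each member of F is strictly below L
  have hmemql : ∀ M ∈ F, M ⊂ L := by
    intro M hM
    obtain ⟨M', hM', hMM'⟩ : ∃ M' ∈ F, M' ≠ M := by
      by_contra hcon
      push_neg at hcon
      have : F ⊆ {M} := fun z hz => by simpa using hcon z hz
      have := Finset.card_le_card this
      simp at this; omega
    have hdisjMM : M' ∩ M = ∅ := hdisj M' hM' M hM hMM'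
    have hM'ne : M'.Nonempty := mem_B_nonempty hb ((hWB M' (hFW hM')).1)
    refine Finset.ssubset_of_ssubset_of_subset ?_ hKL
    refine Finset.ssubset_iff_of_subset (Finset.le_sup (f := id) hM) |>.2 ?_
    obtain ⟨y, hy⟩ := hM'ne
    refine ⟨y, Finset.le_sup (f := id) hM' hy, fun hyM => ?_⟩
    have : y ∈ M' ∩ M := Finset.mem_inter.2 ⟨hy, hyM⟩
    simp [hdisjMM] at this
  by_cases hxK : x ∈ K
  · obtain ⟨M, hM, hxM⟩ : ∃ M ∈ F, x ∈ M := by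
      simpa [hKdef, Finset.mem_sup] using hxK
    exact hx1 M (hFW hM) (hmemql M hM) hxM
  · have hKe : K ⊆ L.erase x := fun z hz => Finset.mem_erase.2 ⟨fun h => hxK (h ▸ hz), hKL hz⟩
    obtain ⟨K', hK'W, hK'L, hKK'⟩ := hx2 K hsupB hKe
    exact hmin K' (Or.inl hK'W) hKK' hK'L

lemma goodW_maxNested (hb : IsBuilding S B) (hconn : Bmax B = {S})
    (hW : GoodW S B W) : MaxNested B W := by
  classical
  refine ⟨goodW_isNested hb hconn hW, ?_⟩
  intro N' hN' hWN'
  refine Finset.Subset.antisymm hWN' ?_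
  intro K hKN'
  by_contra hKW
  obtain ⟨hWB, hcompat, hP1⟩ := hW
  have hKB : K ∈ B := (Finset.mem_sdiff.1 (hN'.1 hKN')).1
  have hKnS : K ≠ S := by
    have := (Finset.mem_sdiff.1 (hN'.1 hKN')).2
    rw [hconn] at this; simpa using this
  have hKssS : K ⊂ S := Finset.ssubset_iff_subset_ne.2 ⟨mem_B_subset hb hKB, hKnS⟩
  obtain ⟨L, hLmem, hKL, hmin⟩ := exists_min_superset W S K (fun L => K ⊂ L) hKssS
  have hLB : L ∈ B := by
    rcases hLmem with h | h
    · exact (hWB L h).1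
    · exact h ▸ S_mem_B hconn
  obtain ⟨x, hxL, hx1, hx2⟩ := hP1 L hLmem
  -- members of N' are pairwise compatible; W ⊆ N'
  have hcomp' : ∀ A ∈ N', ∀ A' ∈ N', A ⊆ A' ∨ A' ⊆ A ∨ A ∩ A' = ∅ := hN'.2.1
  by_cases hxK : x ∈ K
  · -- build the violating disjoint family
    set Wsub := W.filter (fun K' => K' ⊂ L ∧ K' ∩ K = ∅) with hWsubdef
    set Mx := Bmax Wsub with hMxdef
    have hMxW : ∀ A ∈ Mx, A ∈ W ∧ A ⊂ L ∧ A ∩ K = ∅ := by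
      intro A hA
      have := (mem_Bmax_iff.1 hA).1
      rw [hWsubdef, Finset.mem_filter] at this
      tauto
    have hKMx : K ∉ Mx := fun h => hKW (hMxW K h).1
    set F : Finset (Finset ℕ) := insert K Mx with hFdef
    have hFN' : F ⊆ N' := by
      intro A hA
      rw [hFdef, Finset.mem_insert] at hA
      rcases hA with h | h
      · exact h ▸ hKN'
      · exact hWN' (hMxW A h).1
    have hdisjF : ∀ A ∈ F, ∀ A' ∈ F, A ≠ A' → A ∩ A' = ∅ := by
      intro A hA A' hA' hne
      rw [hFdef, Finset.mem_insert] at hA hA'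
      rcases hA with rfl | hA <;> rcases hA' with rfl | hA'
      · exact absurd rfl hne
      · rw [Finset.inter_comm]; exact (hMxW A' hA').2.2
      · exact (hMxW A hA).2.2
      · -- two distinct maximal elements of Wsub
        have h1 := hMxW A hA; have h2 := hMxW A' hA'
        rcases hcomp' A (hWN' h1.1) A' (hWN' h2.1) with h | h | h
        · exact absurd ((mem_Bmax_iff.1 hA).2 A' (mem_Bmax_iff.1 hA').1 h) hne
        · exact absurd ((mem_Bmax_iff.1 hA').2 A (mem_Bmax_iff.1 hA).1 h).symm hne
        · exact h
    have hsupL : F.sup id = L := by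
      apply Finset.Subset.antisymm
      · show F.sup id ≤ L
        apply Finset.sup_le
        intro A hA
        rw [hFdef, Finset.mem_insert] at hA
        rcases hA with rfl | hA
        · exact hKL.1
        · exact (hMxW A hA).2.1.1
      · intro y hyL
        by_cases hyK : y ∈ K
        · exact Finset.le_sup (f := id) (Finset.mem_insert_self K Mx) hyK
        · have hyx : y ≠ x := fun h => hyK (h ▸ hxK)
          have hyB : ({y} : Finset ℕ) ∈ B := hb.2.2 y (mem_B_subset hb hLB hyL)
          have : ({y} : Finset ℕ) ⊆ L.erase x := by
            simp [Finset.mem_erase, hyx, hyL]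
          obtain ⟨K', hK'W, hK'L, hyK'⟩ := hx2 _ hyB this
          have hKcomp : K' ∩ K = ∅ := by
            rcases hcomp' K' (hWN' hK'W) K hKN' with h | h | h
            · exact absurd (h (hyK' (Finset.mem_singleton_self y))) hyK
            · have hne : K ≠ K' := fun hE => hKW (hE ▸ hK'W)
              exact absurd hK'L (hmin K' (Or.inl hK'W) (Finset.ssubset_iff_subset_ne.2 ⟨h, hne⟩))
            · exact h
          have hK'sub : K' ∈ Wsub := by
            rw [hWsubdef, Finset.mem_filter]; exact ⟨hK'W, hK'L, hKcomp⟩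
          obtain ⟨A, hAMx, hK'A⟩ := exists_le_bmax Wsub hK'sub
          refine Finset.le_sup (f := id) (Finset.mem_insert_of_mem hAMx) ?_
          exact hK'A (hyK' (Finset.mem_singleton_self y))
    have hMxne : Mx.Nonempty := by
      by_contra hcon
      rw [Finset.not_nonempty_iff_eq_empty] at hcon
      rw [hFdef, hcon] at hsupL
      simp at hsupL
      exact hKL.ne hsupL
    have hcard : 2 ≤ F.card := by
      rw [hFdef, Finset.card_insert_of_notMem hKMx]
      have := Finset.card_pos.2 hMxne
      omega
    exact hN'.2.2 F hFN' hcard hdisjF (hsupL ▸ hLB)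
  · obtain ⟨K', hK'W, hK'L, hKK'⟩ := hx2 K hKB
      (fun z hz => Finset.mem_erase.2 ⟨fun h => hxK (h ▸ hz), hKL.1 hz⟩)
    have hne : K ≠ K' := fun hE => hKW (hE ▸ hK'W)
    exact hmin K' (Or.inl hK'W) (Finset.ssubset_iff_subset_ne.2 ⟨hKK', hne⟩) hK'L

-- ## Subtrees

def SubGood (B : Finset (Finset ℕ)) (J : Finset ℕ) (x : ℕ) (M : Finset (Finset ℕ)) : Prop :=
  (∀ K ∈ M, K ∈ B ∧ K ⊆ J.erase x) ∧
  (∀ K ∈ M, ∀ L ∈ M, K ⊆ L ∨ L ⊆ K ∨ K ∩ L = ∅) ∧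
  (∀ L ∈ M, P1cond B M L) ∧
  (∀ K ∈ B, K ⊆ J.erase x → ∃ K' ∈ M, K ⊆ K')

lemma sub_exists (hb : IsBuilding S B) :
    ∀ (m : ℕ) (J : Finset ℕ), J.card ≤ m → J ∈ B → ∀ x ∈ J, ∃ M, SubGood B J x M := by
  classical
  intro m
  induction m with
  | zero =>
    intro J hcard hJ x hx
    have := Finset.card_pos.2 (mem_B_nonempty hb hJ)
    omega
  | succ m ih =>
    intro J hcard hJ x hx
    by_cases hT : J.erase x = ∅
    · refine ⟨∅, by simp [SubGood], by simp, by simp, ?_⟩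
      intro K hK hKT
      rw [hT] at hKT
      obtain ⟨y, hy⟩ := mem_B_nonempty hb hK
      exact absurd (hKT hy) (by simp)
    set T := J.erase x with hTdef
    set F := Bmax (restrict B T) with hFdef
    have hcardT : T.card = J.card - 1 := Finset.card_erase_of_mem hx
    have hAfacts : ∀ A ∈ F, A ∈ B ∧ A ⊆ T ∧ A.Nonempty ∧ A.card ≤ m := by
      intro A hA
      obtain ⟨hAB, hAT⟩ := decomp_mem hA
      have hle := Finset.card_le_card hAT
      have hJpos := Finset.card_pos.2 ⟨x, hx⟩
      exact ⟨hAB, hAT, mem_B_nonempty hb hAB, by omega⟩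
    have hrec : ∀ A ∈ F, ∃ p, p ∈ A ∧ ∃ MA, SubGood B A p MA := by
      intro A hA
      obtain ⟨hAB, hAT, hAne, hAm⟩ := hAfacts A hA
      refine ⟨A.min' hAne, A.min'_mem hAne, ?_⟩
      exact ih A hAm hAB _ (A.min'_mem hAne)
    choose xf hxf Mf hMf using hrec
    set M : Finset (Finset ℕ) := F ∪ F.attach.biUnion (fun a => Mf a.1 a.2) with hMdef
    have hmem : ∀ K, K ∈ M ↔ K ∈ F ∨ ∃ (A : Finset ℕ) (hA : A ∈ F), K ∈ Mf A hA := by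
      intro K
      simp only [hMdef, Finset.mem_union, Finset.mem_biUnion, Finset.mem_attach, true_and]
      constructor
      · rintro (h | ⟨⟨A, hA⟩, hK⟩)
        · exact Or.inl h
        · exact Or.inr ⟨A, hA, hK⟩
      · rintro (h | ⟨A, hA, hK⟩)
        · exact Or.inl h
        · exact Or.inr ⟨⟨A, hA⟩, hK⟩
    -- basic facts about members
    have hsub1 : ∀ (A : Finset ℕ) (hA : A ∈ F), ∀ K ∈ Mf A hA, K ∈ B ∧ K ⊆ A.erase (xf A hA) :=
      fun A hA => (hMf A hA).1
    have hsubA : ∀ (A : Finset ℕ) (hA : A ∈ F), ∀ K ∈ Mf A hA, K ⊆ A :=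
      fun A hA K hK => (hsub1 A hA K hK).2.trans (Finset.erase_subset _ _)
    have hclause1 : ∀ K ∈ M, K ∈ B ∧ K ⊆ T := by
      intro K hK
      rcases (hmem K).1 hK with h | ⟨A, hA, h⟩
      · exact ⟨(hAfacts K h).1, (hAfacts K h).2.1⟩
      · exact ⟨(hsub1 A hA K h).1, (hsubA A hA K h).trans (hAfacts A hA).2.1⟩
    have hFdisj : ∀ A ∈ F, ∀ A' ∈ F, A ≠ A' → A ∩ A' = ∅ := by
      intro A hA A' hA' hne
      exact decomp_disj hb hA hA' hne
    have hKne : ∀ K ∈ M, K.Nonempty := fun K hK => mem_B_nonempty hb (hclause1 K hK).1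
    -- compatibility
    have hcompat : ∀ K ∈ M, ∀ L ∈ M, K ⊆ L ∨ L ⊆ K ∨ K ∩ L = ∅ := by
      intro K hK L hL
      rcases (hmem K).1 hK with hKF | ⟨A, hA, hKs⟩ <;>
        rcases (hmem L).1 hL with hLF | ⟨A', hA', hLs⟩
      · by_cases h : K = L
        · exact Or.inl (h ▸ Finset.Subset.refl K)
        · exact Or.inr (Or.inr (hFdisj K hKF L hLF h))
      · by_cases h : K = A'
        · exact Or.inr (Or.inl (h ▸ hsubA A' hA' L hLs))
        · refine Or.inr (Or.inr (Finset.subset_empty.1 ?_))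
          have := hFdisj K hKF A' hA' h
          exact this ▸ Finset.inter_subset_inter (Finset.Subset.refl K) (hsubA A' hA' L hLs)
      · by_cases h : L = A
        · exact Or.inl (h ▸ hsubA A hA K hKs)
        · refine Or.inr (Or.inr (Finset.subset_empty.1 ?_))
          have := hFdisj A hA L hLF (fun hE => h hE.symm)
          exact this ▸ Finset.inter_subset_inter (hsubA A hA K hKs) (Finset.Subset.refl L)
      · by_cases h : A = A'
        · subst h
          exact (hMf A hA).2.1 K hKs L hLs
        · refine Or.inr (Or.inr (Finset.subset_empty.1 ?_))
          have := hFdisj A hA A' hA' h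
          exact this ▸ Finset.inter_subset_inter (hsubA A hA K hKs) (hsubA A' hA' L hLs)
    refine ⟨M, hclause1, hcompat, ?_, ?_⟩
    · -- P1 at each node
      intro L hL
      rcases (hmem L).1 hL with hLF | ⟨A, hA, hLs⟩
      · -- L is a top node A
        refine ⟨xf L hLF, hxf L hLF, ?_, ?_⟩
        · intro K hK hKL
          rcases (hmem K).1 hK with hKF | ⟨A', hA', hKs⟩
          · by_cases h : K = L
            · exact absurd (h ▸ hKL) (lt_irrefl _)
            · obtain ⟨y, hy⟩ := hKne K hK
              have := hFdisj K hKF L hLF h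
              have : y ∈ K ∩ L := Finset.mem_inter.2 ⟨hy, hKL.1 hy⟩
              simp_all
          · by_cases h : A' = L
            · subst h
              intro hxK
              exact (Finset.mem_erase.1 ((hsub1 A' hA' K hKs).2 hxK)).1 rfl
            · obtain ⟨y, hy⟩ := hKne K hK
              have hd := hFdisj A' hA' L hLF h
              have : y ∈ A' ∩ L := Finset.mem_inter.2 ⟨hsubA A' hA' K hKs hy, hKL.1 hy⟩
              simp_all
        · intro K hKB hKe
          obtain ⟨K', hK', hKK'⟩ := (hMf L hLF).2.2.2 K hKB hKe
          refine ⟨K', (hmem K').2 (Or.inr ⟨L, hLF, hK'⟩), ?_, hKK'⟩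
          exact Finset.ssubset_of_subset_of_ssubset ((hsub1 L hLF K' hK').2)
            (Finset.erase_ssubset (hxf L hLF))
      · -- L is inside subtree of A
        obtain ⟨y, hyL, hc1, hc2⟩ := (hMf A hA).2.2.1 L hLs
        have hLA : L ⊆ A.erase (xf A hA) := (hsub1 A hA L hLs).2
        refine ⟨y, hyL, ?_, ?_⟩
        · intro K hK hKL
          rcases (hmem K).1 hK with hKF | ⟨A', hA', hKs⟩
          · -- K ∈ F with K ⊂ L ⊆ A: forces K = A, contradiction
            by_cases h : K = A
            · subst h
              exact absurd (Finset.ssubset_of_ssubset_of_subset hKL (hLA.trans (Finset.erase_subset _ _))) (ssubset_irrefl _)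
            · obtain ⟨z, hz⟩ := hKne K hK
              have hd := hFdisj K hKF A hA h
              have : z ∈ K ∩ A := Finset.mem_inter.2
                ⟨hz, (hLA.trans (Finset.erase_subset _ _)) (hKL.1 hz)⟩
              simp_all
          · by_cases h : A' = A
            · subst h
              exact hc1 K hKs hKL
            · obtain ⟨z, hz⟩ := hKne K hK
              have hd := hFdisj A' hA' A hA h
              have : z ∈ A' ∩ A := Finset.mem_inter.2
                ⟨hsubA A' hA' K hKs hz, (hLA.trans (Finset.erase_subset _ _)) (hKL.1 hz)⟩
              simp_all
        · intro K hKB hKe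
          obtain ⟨K', hK'M, hK'L, hKK'⟩ := hc2 K hKB hKe
          exact ⟨K', (hmem K').2 (Or.inr ⟨A, hA, hK'M⟩), hK'L, hKK'⟩
    · -- coverage at the top
      intro K hKB hKT
      obtain ⟨A, hA, hKA⟩ := exists_max_restrict hb hKB hKT
      exact ⟨A, (hmem A).2 (Or.inl hA), hKA⟩

-- ## Chains

def ChainGood (B : Finset (Finset ℕ)) (J V : Finset ℕ) (x : ℕ) (M : Finset (Finset ℕ)) : Prop :=
  (∀ K ∈ M, K ∈ B ∧ K ⊆ J.erase x) ∧
  (∀ K ∈ M, ∀ L ∈ M, K ⊆ L ∨ L ⊆ K ∨ K ∩ L = ∅) ∧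
  V ∈ M ∧
  (∀ K ∈ M, ¬ K ⊂ V) ∧
  (∀ L ∈ M, L ≠ V → ∃ y, y ∈ L ∧ y ∉ V ∧ (∀ K ∈ M, K ⊂ L → y ∉ K) ∧
      (∀ K ∈ B, K ⊆ L.erase y → ∃ K' ∈ M, K' ⊂ L ∧ K ⊆ K')) ∧
  (∀ K ∈ B, K ⊆ J.erase x → ∃ K' ∈ M, K ⊆ K')

lemma chain_exists (hb : IsBuilding S B) :
    ∀ (m : ℕ) (J : Finset ℕ), J.card ≤ m → J ∈ B → ∀ V, V ∈ B → V ⊂ J →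
      ∃ x, x ∈ J ∧ x ∉ V ∧ ∃ M, ChainGood B J V x M := by
  classical
  intro m
  induction m with
  | zero =>
    intro J hcard hJ V hVB hVJ
    have := Finset.card_pos.2 (mem_B_nonempty hb hJ)
    omega
  | succ m ih =>
    intro J hcard hJ V hVB hVJ
    obtain ⟨x, hxJ, hxV⟩ := Finset.exists_of_ssubset hVJ
    refine ⟨x, hxJ, hxV, ?_⟩
    set T := J.erase x with hTdef
    have hVT : V ⊆ T := fun z hz => Finset.mem_erase.2 ⟨fun h => hxV (h ▸ hz), hVJ.1 hz⟩
    set F := Bmax (restrict B T) with hFdef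
    have hcardT : T.card = J.card - 1 := Finset.card_erase_of_mem hxJ
    obtain ⟨Z, hZF, hVZ⟩ := exists_max_restrict hb hVB hVT
    have hAfacts : ∀ A ∈ F, A ∈ B ∧ A ⊆ T ∧ A.Nonempty := by
      intro A hA
      obtain ⟨hAB, hAT⟩ := decomp_mem hA
      exact ⟨hAB, hAT, mem_B_nonempty hb hAB⟩
    have hFdisj : ∀ A ∈ F, ∀ A' ∈ F, A ≠ A' → A ∩ A' = ∅ :=
      fun A hA A' hA' hne => decomp_disj hb hA hA' hne
    -- the pack for the distinguished component Z
    obtain ⟨xZ, MZ, hz1, hz2, hz3, hz4, hz5, hz6⟩ : ∃ (xZ : ℕ) (MZ : Finset (Finset ℕ)),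
        (∀ K ∈ MZ, K ∈ B ∧ K ⊆ Z.erase xZ) ∧
        (∀ K ∈ MZ, ∀ L ∈ MZ, K ⊆ L ∨ L ⊆ K ∨ K ∩ L = ∅) ∧
        (V ∈ MZ ∨ V = Z) ∧
        (∀ K ∈ MZ, ¬ K ⊂ V) ∧
        (∀ L ∈ MZ, L ≠ V → ∃ y, y ∈ L ∧ y ∉ V ∧ (∀ K ∈ MZ, K ⊂ L → y ∉ K) ∧
            (∀ K ∈ B, K ⊆ L.erase y → ∃ K' ∈ MZ, K' ⊂ L ∧ K ⊆ K')) ∧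
        (V ≠ Z → xZ ∈ Z ∧ xZ ∉ V ∧ ∀ K ∈ B, K ⊆ Z.erase xZ → ∃ K' ∈ MZ, K ⊆ K') := by
      rcases eq_or_ne V Z with heq | hVZne
      case inl =>
        refine ⟨0, (∅ : Finset (Finset ℕ)), ?_, ?_, Or.inr heq, ?_, ?_, fun h => absurd heq h⟩ <;>
          intro K hK <;> exact absurd hK (Finset.notMem_empty _)
      case inr =>
        have hss : V ⊂ Z := Finset.ssubset_iff_subset_ne.2 ⟨hVZ, hVZne⟩
        have hZB : Z ∈ B := (hAfacts Z hZF).1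
        have hZm : Z.card ≤ m := by
          have h1 := Finset.card_le_card (hAfacts Z hZF).2.1
          have h2 := Finset.card_pos.2 ⟨x, hxJ⟩
          omega
        obtain ⟨x', hx'Z, hx'V, M', hM'⟩ := ih Z hZm hZB V hVB hss
        obtain ⟨m1, m2, m3, m4, m5, m6⟩ := hM'
        exact ⟨x', M', m1, m2, Or.inl m3, m4, m5, fun _ => ⟨hx'Z, hx'V, m6⟩⟩
    -- subtrees for the other components
    set D := F.erase Z with hDdef
    have hrec : ∀ A ∈ D, ∃ p, p ∈ A ∧ ∃ MA, SubGood B A p MA := by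
      intro A hA
      have hAF : A ∈ F := Finset.mem_of_mem_erase hA
      obtain ⟨hAB, hAT, hAne⟩ := hAfacts A hAF
      exact ⟨A.min' hAne, A.min'_mem hAne, sub_exists hb A.card A le_rfl hAB _ (A.min'_mem hAne)⟩
    choose xf hxf Mf hMf using hrec
    set M : Finset (Finset ℕ) := F ∪ MZ ∪ D.attach.biUnion (fun a => Mf a.1 a.2) with hMdef
    have hmem : ∀ K, K ∈ M ↔ K ∈ F ∨ K ∈ MZ ∨ ∃ (A : Finset ℕ) (hA : A ∈ D), K ∈ Mf A hA := by
      intro K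
      simp only [hMdef, Finset.mem_union, Finset.mem_biUnion, Finset.mem_attach, true_and]
      constructor
      · rintro ((h | h) | ⟨⟨A, hA⟩, hK⟩)
        · exact Or.inl h
        · exact Or.inr (Or.inl h)
        · exact Or.inr (Or.inr ⟨A, hA, hK⟩)
      · rintro (h | h | ⟨A, hA, hK⟩)
        · exact Or.inl (Or.inl h)
        · exact Or.inl (Or.inr h)
        · exact Or.inr ⟨⟨A, hA⟩, hK⟩
    have hsub1 : ∀ (A : Finset ℕ) (hA : A ∈ D), ∀ K ∈ Mf A hA, K ∈ B ∧ K ⊆ A.erase (xf A hA) :=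
      fun A hA => (hMf A hA).1
    have hsubA : ∀ (A : Finset ℕ) (hA : A ∈ D), ∀ K ∈ Mf A hA, K ⊆ A :=
      fun A hA K hK => (hsub1 A hA K hK).2.trans (Finset.erase_subset _ _)
    have hZT : Z ⊆ T := (hAfacts Z hZF).2.1
    have hMZsub : ∀ K ∈ MZ, K ⊆ Z := fun K hK => ((hz1 K hK).2).trans (Finset.erase_subset _ _)
    have hclause1 : ∀ K ∈ M, K ∈ B ∧ K ⊆ T := by
      intro K hK
      rcases (hmem K).1 hK with h | h | ⟨A, hA, h⟩
      · exact ⟨(hAfacts K h).1, (hAfacts K h).2.1⟩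
      · exact ⟨(hz1 K h).1, (hMZsub K h).trans hZT⟩
      · exact ⟨(hsub1 A hA K h).1, (hsubA A hA K h).trans (hAfacts A (Finset.mem_of_mem_erase hA)).2.1⟩
    have hKne : ∀ K ∈ M, K.Nonempty := fun K hK => mem_B_nonempty hb (hclause1 K hK).1
    -- a container in F for every member
    have hcont : ∀ K ∈ M, ∃ A ∈ F, K ⊆ A ∧ (K ≠ A → K ∉ F) := by
      intro K hK
      rcases (hmem K).1 hK with h | h | ⟨A, hA, h⟩
      · exact ⟨K, h, Finset.Subset.refl K, fun hne => absurd rfl hne⟩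
      · refine ⟨Z, hZF, hMZsub K h, ?_⟩
        intro hne hKF
        obtain ⟨y, hy⟩ := hKne K hK
        have hd := hFdisj K hKF Z hZF hne
        have hyy : y ∈ K ∩ Z := Finset.mem_inter.2 ⟨hy, hMZsub K h hy⟩
        rw [hd] at hyy
        exact absurd hyy (Finset.notMem_empty _)
      · have hAF : A ∈ F := Finset.mem_of_mem_erase hA
        refine ⟨A, hAF, hsubA A hA K h, ?_⟩
        intro hne hKF
        obtain ⟨y, hy⟩ := hKne K hK
        have hd := hFdisj K hKF A hAF hne
        have hyy : y ∈ K ∩ A := Finset.mem_inter.2 ⟨hy, hsubA A hA K h hy⟩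
        rw [hd] at hyy
        exact absurd hyy (Finset.notMem_empty _)
    have hcompat : ∀ K ∈ M, ∀ L ∈ M, K ⊆ L ∨ L ⊆ K ∨ K ∩ L = ∅ := by
      intro K hK L hL
      obtain ⟨AK, hAK, hKAK, hKonly⟩ := hcont K hK
      obtain ⟨AL, hAL, hLAL, hLonly⟩ := hcont L hL
      by_cases hAA : AK = AL
      · subst hAA
        -- both inside the same component
        rcases (hmem K).1 hK with h | h | ⟨A, hA, h⟩ <;>
          rcases (hmem L).1 hL with h' | h' | ⟨A', hA', h'⟩
        · by_cases hKL : K = L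
          · exact Or.inl (hKL ▸ Finset.Subset.refl K)
          · exact Or.inr (Or.inr (hFdisj K h L h' hKL))
        · -- K ∈ F, so K = AK (container unique-ish)
          by_cases hKL : K = AK
          · exact Or.inr (Or.inl (hKL ▸ hLAL))
          · obtain ⟨y, hy⟩ := hKne K hK
            have hd := hFdisj K h AK hAK hKL
            have hyy : y ∈ K ∩ AK := Finset.mem_inter.2 ⟨hy, hKAK hy⟩
            rw [hd] at hyy
            exact absurd hyy (Finset.notMem_empty _)
        · by_cases hKL : K = AK
          · exact Or.inr (Or.inl (hKL ▸ hLAL))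
          · obtain ⟨y, hy⟩ := hKne K hK
            have hd := hFdisj K h AK hAK hKL
            have hyy : y ∈ K ∩ AK := Finset.mem_inter.2 ⟨hy, hKAK hy⟩
            rw [hd] at hyy
            exact absurd hyy (Finset.notMem_empty _)
        · by_cases hKL : L = AK
          · exact Or.inl (hKL ▸ hKAK)
          · obtain ⟨y, hy⟩ := hKne L hL
            have hd := hFdisj L h' AK hAK hKL
            have hyy : y ∈ L ∩ AK := Finset.mem_inter.2 ⟨hy, hLAL hy⟩
            rw [hd] at hyy
            exact absurd hyy (Finset.notMem_empty _)
        · exact hz2 K h L h'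
        · -- K ∈ MZ (container Z), L ∈ subtree of A' with container A' = AK = Z; but A' ∈ D = F.erase Z
          exfalso
          have hA'F : A' ∈ F := Finset.mem_of_mem_erase hA'
          have hA'AK : A' = AK := by
            by_contra hne
            obtain ⟨y, hy⟩ := hKne L hL
            have hd := hFdisj A' hA'F AK hAK hne
            have hyy : y ∈ A' ∩ AK := Finset.mem_inter.2 ⟨hsubA A' hA' L h' hy, hLAL hy⟩
            rw [hd] at hyy
            exact absurd hyy (Finset.notMem_empty _)
          -- AK is the container of K ∈ MZ; show AK = Z
          have hZAK : Z = AK := by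
            by_contra hne
            obtain ⟨y, hy⟩ := hKne K hK
            have hd := hFdisj Z hZF AK hAK hne
            have hyy : y ∈ Z ∩ AK := Finset.mem_inter.2 ⟨hMZsub K h hy, hKAK hy⟩
            rw [hd] at hyy
            exact absurd hyy (Finset.notMem_empty _)
          exact (Finset.mem_erase.1 hA').1 (hA'AK.trans hZAK.symm)
        · by_cases hKL : L = AK
          · exact Or.inl (hKL ▸ hKAK)
          · obtain ⟨y, hy⟩ := hKne L hL
            have hd := hFdisj L h' AK hAK hKL
            have hyy : y ∈ L ∩ AK := Finset.mem_inter.2 ⟨hy, hLAL hy⟩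
            rw [hd] at hyy
            exact absurd hyy (Finset.notMem_empty _)
        · exfalso
          have hAF : A ∈ F := Finset.mem_of_mem_erase hA
          have hAAK : A = AK := by
            by_contra hne
            obtain ⟨y, hy⟩ := hKne K hK
            have hd := hFdisj A hAF AK hAK hne
            have hyy : y ∈ A ∩ AK := Finset.mem_inter.2 ⟨hsubA A hA K h hy, hKAK hy⟩
            rw [hd] at hyy
            exact absurd hyy (Finset.notMem_empty _)
          have hZAK : Z = AK := by
            by_contra hne
            obtain ⟨y, hy⟩ := hKne L hL
            have hd := hFdisj Z hZF AK hAK hne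
            have hyy : y ∈ Z ∩ AK := Finset.mem_inter.2 ⟨hMZsub L h' hy, hLAL hy⟩
            rw [hd] at hyy
            exact absurd hyy (Finset.notMem_empty _)
          exact (Finset.mem_erase.1 hA).1 (hAAK.trans hZAK.symm)
        · -- both in subtrees
          have hAF : A ∈ F := Finset.mem_of_mem_erase hA
          have hA'F : A' ∈ F := Finset.mem_of_mem_erase hA'
          by_cases hAA' : A = A'
          · subst hAA'
            exact (hMf A hA).2.1 K h L h'
          · obtain ⟨y, hy⟩ := hKne K hK
            exfalso
            have hAAK : A = AK := by
              by_contra hne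
              have hd := hFdisj A hAF AK hAK hne
              have hyy : y ∈ A ∩ AK := Finset.mem_inter.2 ⟨hsubA A hA K h hy, hKAK hy⟩
              rw [hd] at hyy
              exact absurd hyy (Finset.notMem_empty _)
            obtain ⟨y', hy'⟩ := hKne L hL
            have hA'AK : A' = AK := by
              by_contra hne
              have hd := hFdisj A' hA'F AK hAK hne
              have hyy : y' ∈ A' ∩ AK := Finset.mem_inter.2 ⟨hsubA A' hA' L h' hy', hLAL hy'⟩
              rw [hd] at hyy
              exact absurd hyy (Finset.notMem_empty _)
            exact hAA' (hAAK.trans hA'AK.symm)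
      · -- different containers: disjoint
        refine Or.inr (Or.inr (Finset.subset_empty.1 ?_))
        have := hFdisj AK hAK AL hAL hAA
        exact this ▸ Finset.inter_subset_inter hKAK hLAL
    refine ⟨M, hclause1, hcompat, ?_, ?_, ?_, ?_⟩
    · -- V ∈ M
      rcases hz3 with h | h
      · exact (hmem V).2 (Or.inr (Or.inl h))
      · exact (hmem V).2 (Or.inl (h ▸ hZF))
    · -- no member strictly below V
      intro K hK hKV
      rcases (hmem K).1 hK with h | h | ⟨A, hA, h⟩
      · -- K ∈ F, K ⊂ V ⊆ Z
        by_cases hne : K = Z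
        · exact absurd (Finset.ssubset_of_ssubset_of_subset (hne ▸ hKV) hVZ) (ssubset_irrefl _)
        · obtain ⟨y, hy⟩ := hKne K hK
          have hd := hFdisj K h Z hZF hne
          have hyy : y ∈ K ∩ Z := Finset.mem_inter.2 ⟨hy, hVZ (hKV.1 hy)⟩
          rw [hd] at hyy
          exact absurd hyy (Finset.notMem_empty _)
      · exact hz4 K h hKV
      · obtain ⟨y, hy⟩ := hKne K hK
        have hAF : A ∈ F := Finset.mem_of_mem_erase hA
        have hne : A ≠ Z := (Finset.mem_erase.1 hA).1
        have hd := hFdisj A hAF Z hZF hne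
        have hyy : y ∈ A ∩ Z := Finset.mem_inter.2 ⟨hsubA A hA K h hy, hVZ (hKV.1 hy)⟩
        rw [hd] at hyy
        exact absurd hyy (Finset.notMem_empty _)
    · -- the local P1-style condition at every node except V
      intro L hL hLV
      rcases (hmem L).1 hL with h | h | ⟨A, hA, h⟩
      · by_cases hLZ : L = Z
        · -- L = Z ≠ V
          subst hLZ
          have hVne : V ≠ L := fun hE => hLV hE.symm
          obtain ⟨hxZL, hxZV, hcov⟩ := hz6 hVne
          refine ⟨xZ, hxZL, hxZV, ?_, ?_⟩
          · intro K hK hKL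
            rcases (hmem K).1 hK with h' | h' | ⟨A, hA, h'⟩
            · by_cases hne : K = L
              · exact absurd (hne ▸ hKL) (ssubset_irrefl _)
              · obtain ⟨y, hy⟩ := hKne K hK
                have hd := hFdisj K h' L h hne
                have hyy : y ∈ K ∩ L := Finset.mem_inter.2 ⟨hy, hKL.1 hy⟩
                rw [hd] at hyy
                exact absurd hyy (Finset.notMem_empty _)
            · exact fun hxK => (Finset.mem_erase.1 ((hz1 K h').2 hxK)).1 rfl
            · obtain ⟨y, hy⟩ := hKne K hK
              have hAF : A ∈ F := Finset.mem_of_mem_erase hA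
              have hne : A ≠ L := (Finset.mem_erase.1 hA).1
              have hd := hFdisj A hAF L h hne
              have hyy : y ∈ A ∩ L := Finset.mem_inter.2 ⟨hsubA A hA K h' hy, hKL.1 hy⟩
              rw [hd] at hyy
              exact absurd hyy (Finset.notMem_empty _)
          · intro K hKB hKe
            obtain ⟨K', hK', hKK'⟩ := hcov K hKB hKe
            refine ⟨K', (hmem K').2 (Or.inr (Or.inl hK')), ?_, hKK'⟩
            exact Finset.ssubset_of_subset_of_ssubset ((hz1 K' hK').2)
              (Finset.erase_ssubset hxZL)
        · -- L ∈ F, L ≠ Z: top of a subtree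
          have hLD : L ∈ D := Finset.mem_erase.2 ⟨hLZ, h⟩
          refine ⟨xf L hLD, hxf L hLD, ?_, ?_, ?_⟩
          · -- xf L ∉ V since V ⊆ Z and L ∩ Z = ∅
            intro hxfV
            have hd := hFdisj L h Z hZF hLZ
            have hyy : xf L hLD ∈ L ∩ Z := Finset.mem_inter.2 ⟨hxf L hLD, hVZ hxfV⟩
            rw [hd] at hyy
            exact absurd hyy (Finset.notMem_empty _)
          · intro K hK hKL
            rcases (hmem K).1 hK with h' | h' | ⟨A, hA, h'⟩
            · by_cases hne : K = L
              · exact absurd (hne ▸ hKL) (ssubset_irrefl _)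
              · obtain ⟨y, hy⟩ := hKne K hK
                have hd := hFdisj K h' L h hne
                have hyy : y ∈ K ∩ L := Finset.mem_inter.2 ⟨hy, hKL.1 hy⟩
                rw [hd] at hyy
                exact absurd hyy (Finset.notMem_empty _)
            · -- K ∈ MZ ⊆ Z, disjoint from L
              obtain ⟨y, hy⟩ := hKne K hK
              have hd := hFdisj Z hZF L h (fun hE => hLZ hE.symm)
              have hyy : y ∈ Z ∩ L := Finset.mem_inter.2 ⟨hMZsub K h' hy, hKL.1 hy⟩
              rw [hd] at hyy
              exact absurd hyy (Finset.notMem_empty _)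
            · by_cases hne : A = L
              · subst hne
                exact fun hxK => (Finset.mem_erase.1 ((hsub1 A hA K h').2 hxK)).1 rfl
              · obtain ⟨y, hy⟩ := hKne K hK
                have hAF : A ∈ F := Finset.mem_of_mem_erase hA
                have hd := hFdisj A hAF L h hne
                have hyy : y ∈ A ∩ L := Finset.mem_inter.2 ⟨hsubA A hA K h' hy, hKL.1 hy⟩
                rw [hd] at hyy
                exact absurd hyy (Finset.notMem_empty _)
          · intro K hKB hKe
            obtain ⟨K', hK', hKK'⟩ := (hMf L hLD).2.2.2 K hKB hKe
            refine ⟨K', (hmem K').2 (Or.inr (Or.inr ⟨L, hLD, hK'⟩)), ?_, hKK'⟩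
            exact Finset.ssubset_of_subset_of_ssubset ((hsub1 L hLD K' hK').2)
              (Finset.erase_ssubset (hxf L hLD))
      · -- L ∈ MZ
        obtain ⟨y, hyL, hyV, hc1, hc2⟩ := hz5 L h hLV
        refine ⟨y, hyL, hyV, ?_, ?_⟩
        · intro K hK hKL
          rcases (hmem K).1 hK with h' | h' | ⟨A, hA, h'⟩
          · -- K ∈ F with K ⊂ L ⊆ Z: forces K = Z, contradiction
            by_cases hne : K = Z
            · subst hne
              exact absurd (Finset.ssubset_of_ssubset_of_subset hKL (hMZsub L h)) (ssubset_irrefl _)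
            · obtain ⟨z, hz⟩ := hKne K hK
              have hd := hFdisj K h' Z hZF hne
              have hyy : z ∈ K ∩ Z := Finset.mem_inter.2 ⟨hz, hMZsub L h (hKL.1 hz)⟩
              rw [hd] at hyy
              exact absurd hyy (Finset.notMem_empty _)
          · exact hc1 K h' hKL
          · obtain ⟨z, hz⟩ := hKne K hK
            have hAF : A ∈ F := Finset.mem_of_mem_erase hA
            have hne : A ≠ Z := (Finset.mem_erase.1 hA).1
            have hd := hFdisj A hAF Z hZF hne
            have hyy : z ∈ A ∩ Z := Finset.mem_inter.2 ⟨hsubA A hA K h' hz, hMZsub L h (hKL.1 hz)⟩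
            rw [hd] at hyy
            exact absurd hyy (Finset.notMem_empty _)
        · intro K hKB hKe
          obtain ⟨K', hK', hK'L, hKK'⟩ := hc2 K hKB hKe
          exact ⟨K', (hmem K').2 (Or.inr (Or.inl hK')), hK'L, hKK'⟩
      · -- L in the subtree of A ∈ D
        have hAF : A ∈ F := Finset.mem_of_mem_erase hA
        have hAZ : A ≠ Z := (Finset.mem_erase.1 hA).1
        obtain ⟨y, hyL, hc1, hc2⟩ := (hMf A hA).2.2.1 L h
        have hLA : L ⊆ A := hsubA A hA L h
        refine ⟨y, hyL, ?_, ?_, ?_⟩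
        · intro hyV
          have hd := hFdisj A hAF Z hZF hAZ
          have hyy : y ∈ A ∩ Z := Finset.mem_inter.2 ⟨hLA hyL, hVZ hyV⟩
          rw [hd] at hyy
          exact absurd hyy (Finset.notMem_empty _)
        · intro K hK hKL
          rcases (hmem K).1 hK with h' | h' | ⟨A', hA', h'⟩
          · by_cases hne : K = A
            · subst hne
              exact absurd (Finset.ssubset_of_ssubset_of_subset hKL hLA) (ssubset_irrefl _)
            · obtain ⟨z, hz⟩ := hKne K hK
              have hd := hFdisj K h' A hAF hne
              have hyy : z ∈ K ∩ A := Finset.mem_inter.2 ⟨hz, hLA (hKL.1 hz)⟩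
              rw [hd] at hyy
              exact absurd hyy (Finset.notMem_empty _)
          · obtain ⟨z, hz⟩ := hKne K hK
            have hd := hFdisj Z hZF A hAF (fun hE => hAZ hE.symm)
            have hyy : z ∈ Z ∩ A := Finset.mem_inter.2 ⟨hMZsub K h' hz, hLA (hKL.1 hz)⟩
            rw [hd] at hyy
            exact absurd hyy (Finset.notMem_empty _)
          · by_cases hne : A' = A
            · subst hne
              exact hc1 K h' hKL
            · obtain ⟨z, hz⟩ := hKne K hK
              have hA'F : A' ∈ F := Finset.mem_of_mem_erase hA'
              have hd := hFdisj A' hA'F A hAF hne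
              have hyy : z ∈ A' ∩ A := Finset.mem_inter.2 ⟨hsubA A' hA' K h' hz, hLA (hKL.1 hz)⟩
              rw [hd] at hyy
              exact absurd hyy (Finset.notMem_empty _)
        · intro K hKB hKe
          obtain ⟨K', hK', hK'L, hKK'⟩ := hc2 K hKB hKe
          exact ⟨K', (hmem K').2 (Or.inr (Or.inr ⟨A, hA, hK'⟩)), hK'L, hKK'⟩
    · -- coverage at the top
      intro K hKB hKT
      obtain ⟨A, hA, hKA⟩ := exists_max_restrict hb hKB hKT
      exact ⟨A, (hmem A).2 (Or.inl hA), hKA⟩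

-- ## Decomposition: union and size facts

lemma decomp_biUnion (hb : IsBuilding S B) {T : Finset ℕ} (hTS : T ⊆ S) :
    (Bmax (restrict B T)).biUnion id = T := by
  apply Finset.Subset.antisymm
  · intro y hy
    obtain ⟨A, hA, hyA⟩ := Finset.mem_biUnion.1 hy
    exact (decomp_mem hA).2 hyA
  · intro y hy
    obtain ⟨A, hA, hyA⟩ := decomp_cover hb hTS hy
    exact Finset.mem_biUnion.2 ⟨A, hA, hyA⟩

lemma decomp_two (hb : IsBuilding S B) {T : Finset ℕ} (hTS : T ⊆ S) (hTne : T.Nonempty)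
    (hTB : T ∉ B) : 2 ≤ (Bmax (restrict B T)).card := by
  obtain ⟨y, hy⟩ := hTne
  obtain ⟨A, hA, hyA⟩ := decomp_cover hb hTS hy
  have h1 : 0 < (Bmax (restrict B T)).card := Finset.card_pos.2 ⟨A, hA⟩
  by_contra hcon
  have hcard : (Bmax (restrict B T)).card = 1 := by omega
  obtain ⟨E, hE⟩ := Finset.card_eq_one.1 hcard
  have := decomp_biUnion hb hTS
  rw [hE] at this
  simp only [Finset.singleton_biUnion, id] at this
  have hEmem : E ∈ Bmax (restrict B T) := by rw [hE]; exact Finset.mem_singleton_self E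
  exact hTB (this ▸ (decomp_mem hEmem).1)

-- ## The extremal bad pair

def badPair (S : Finset ℕ) (B : Finset (Finset ℕ)) (X Y : Finset ℕ) : Prop :=
  X ∈ B ∧ Y ∈ B ∧ (X ∩ Y).Nonempty ∧ ¬X ⊆ Y ∧ ¬Y ⊆ X ∧ X ∩ Y ∉ B ∧
    (X ∪ Y ≠ S ∨ 3 ≤ (Bmax (restrict B (X ∩ Y))).card)

lemma badPair_symm {X Y : Finset ℕ} (h : badPair S B X Y) : badPair S B Y X := by
  obtain ⟨h1, h2, h3, h4, h5, h6, h7⟩ := h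
  rw [Finset.inter_comm] at h3 h6
  rw [Finset.union_comm, Finset.inter_comm] at h7
  exact ⟨h2, h1, h3, h5, h4, h6, h7⟩

def mea (S : Finset ℕ) (X Y : Finset ℕ) : ℕ :=
  (X ∪ Y).card * (2 * S.card + 2) + (2 * S.card - (X.card + Y.card))

lemma mea_lt_of_card_lt {X Y X' Y' : Finset ℕ} (h : (X' ∪ Y').card < (X ∪ Y).card) :
    mea S X' Y' < mea S X Y := by
  unfold mea
  set s := S.card
  set u := (X ∪ Y).card
  set u' := (X' ∪ Y').card
  have h1 : u' * (2 * s + 2) + (2 * s + 2) ≤ u * (2 * s + 2) := by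
    have : u' + 1 ≤ u := h
    calc u' * (2 * s + 2) + (2 * s + 2) = (u' + 1) * (2 * s + 2) := by ring
    _ ≤ u * (2 * s + 2) := Nat.mul_le_mul_right _ this
  have h2 : 2 * s - (X'.card + Y'.card) ≤ 2 * s := Nat.sub_le _ _
  omega

lemma mea_symm {X Y : Finset ℕ} : mea S X Y = mea S Y X := by
  unfold mea
  rw [Finset.union_comm, Nat.add_comm X.card]

lemma card_add_le (hb : IsBuilding S B) {X Y : Finset ℕ} (hX : X ∈ B) (hY : Y ∈ B) :
    X.card + Y.card ≤ 2 * S.card := by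
  have h1 := Finset.card_le_card (mem_B_subset hb hX)
  have h2 := Finset.card_le_card (mem_B_subset hb hY)
  omega

/-- one-sided maximality for an extremal bad pair -/
lemma extremal_max (hb : IsBuilding S B) (hconn : Bmax B = {S}) {X Y : Finset ℕ}
    (hbad : badPair S B X Y)
    (hmin : ∀ X' Y', badPair S B X' Y' → mea S X Y ≤ mea S X' Y') :
    ∀ q ∈ Y \ X, ∀ K ∈ B, X ⊆ K → K ⊆ (X ∪ Y).erase q → K = X := by
  classical
  obtain ⟨hXB, hYB, hXYne, hXY, hYX, hXYB, hlast⟩ := hbad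
  intro q hq K hKB hXK hKe
  set V := X ∪ Y with hVdef
  obtain ⟨hqY, hqX⟩ := Finset.mem_sdiff.1 hq
  obtain ⟨A, hAmax, hKA⟩ := exists_max_restrict hb hKB hKe
  have hAB : A ∈ B := (decomp_mem hAmax).1
  have hAe : A ⊆ V.erase q := (decomp_mem hAmax).2
  have hAV : A ⊆ V := hAe.trans (Finset.erase_subset _ _)
  have hqA : q ∉ A := fun h => (Finset.mem_erase.1 (hAe h)).1 rfl
  have hXA : X ⊆ A := hXK.trans hKA
  -- suffices A = X
  suffices hAX : A = X by
    exact Finset.Subset.antisymm (hAX ▸ hKA) hXK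
  set W := A ∩ Y with hWdef
  have hCW : X ∩ Y ⊆ W := Finset.inter_subset_inter hXA (Finset.Subset.refl Y)
  have hWY : W ⊆ Y := Finset.inter_subset_right
  have hWA : W ⊆ A := Finset.inter_subset_left
  have hXV : X ⊆ V := Finset.subset_union_left
  have hYV : Y ⊆ V := Finset.subset_union_right
  have hXq : X ⊆ V.erase q := fun z hz =>
    Finset.mem_erase.2 ⟨fun h => hqX (h ▸ hz), hXV hz⟩
  have hXinterW : X ∩ W = X ∩ Y := by
    rw [hWdef, ← Finset.inter_assoc, Finset.inter_eq_left.2 hXA]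
  have hqS : q ∈ S := mem_B_subset hb hYB hqY
  have hVS : V ⊆ S := Finset.union_subset (mem_B_subset hb hXB) (mem_B_subset hb hYB)
  -- Step 1: W ∉ B
  have hWB : W ∉ B := by
    intro hWmem
    have hbad' : badPair S B X W := by
      refine ⟨hXB, hWmem, ?_, ?_, ?_, ?_, ?_⟩
      · rw [hXinterW]; exact hXYne
      · exact fun h => hXY (h.trans hWY)
      · intro h
        have : W = X ∩ Y := Finset.Subset.antisymm
          (Finset.subset_inter h hWY) hCW
        exact hXYB (this ▸ hWmem)
      · rw [hXinterW]; exact hXYB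
      · left
        intro hE
        have : q ∈ X ∪ W := hE ▸ hqS
        rcases Finset.mem_union.1 this with h | h
        · exact hqX h
        · exact hqA (hWA h)
    have hlt : mea S X W < mea S X Y := by
      apply mea_lt_of_card_lt
      rw [← hVdef]
      have hsub : X ∪ W ⊆ V.erase q := Finset.union_subset hXq (hWA.trans hAe)
      have h1 := Finset.card_le_card hsub
      have h2 : (V.erase q).card < V.card :=
        Finset.card_erase_lt_of_mem (Finset.mem_union.2 (Or.inr hqY))
      omega
    exact absurd (hmin X W hbad') (by omega)
  -- Step 2: badPair A Y
  have hAY : A ∪ Y = V := by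
    apply Finset.Subset.antisymm (Finset.union_subset hAV hYV)
    exact Finset.union_subset_union hXA (Finset.Subset.refl Y)
  have hbadAY : badPair S B A Y := by
    refine ⟨hAB, hYB, ?_, ?_, ?_, hWB, ?_⟩
    · exact hXYne.mono (Finset.inter_subset_inter hXA (Finset.Subset.refl Y))
    · exact fun h => hXY (hXA.trans h)
    · exact fun h => hqA (h hqY)
    · by_cases hVSeq : V = S
      · right
        rw [← hWdef]
        -- 3 ≤ k(W)
        have hk3 : 3 ≤ (Bmax (restrict B (X ∩ Y))).card := by
          rcases hlast with h | h
          · exact absurd hVSeq h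
          · exact h
        by_contra hcon
        push_neg at hcon
        have hWS : W ⊆ S := hWY.trans (mem_B_subset hb hYB)
        have hWne : W.Nonempty := hXYne.mono hCW
        have h2 : 2 ≤ (Bmax (restrict B W)).card := decomp_two hb hWS hWne hWB
        have hcard2 : (Bmax (restrict B W)).card < (Bmax (restrict B (X ∩ Y))).card := by
          omega
        -- pigeonhole: two components of X ∩ Y inside one component of W
        have hmaps : ∀ D : Finset ℕ, ∃ E, D ∈ Bmax (restrict B (X ∩ Y)) →
            E ∈ Bmax (restrict B W) ∧ D ⊆ E := by
          intro D
          by_cases hD : D ∈ Bmax (restrict B (X ∩ Y))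
          · have hDB : D ∈ B := (decomp_mem hD).1
            have hDW : D ⊆ W := (decomp_mem hD).2.trans hCW
            obtain ⟨E, hE1, hE2⟩ := exists_max_restrict hb hDB hDW
            exact ⟨E, fun _ => ⟨hE1, hE2⟩⟩
          · exact ⟨∅, fun h => absurd h hD⟩
        choose f hf using hmaps
        obtain ⟨D, hD, D', hD', hDD', hfDD'⟩ :=
          Finset.exists_ne_map_eq_of_card_lt_of_maps_to hcard2 (fun D hD => (hf D hD).1)
        set E := f D with hEdef
        have hDE : D ⊆ E := (hf D hD).2
        have hD'E : D' ⊆ E := by rw [hfDD']; exact (hf D' hD').2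
        have hEB : E ∈ B := (decomp_mem (hf D hD).1).1
        have hEW : E ⊆ W := (decomp_mem (hf D hD).1).2
        have hDne : D.Nonempty := mem_B_nonempty hb (decomp_mem hD).1
        have hD'ne : D'.Nonempty := mem_B_nonempty hb (decomp_mem hD').1
        have hDdisj : D ∩ D' = ∅ := decomp_disj hb hD hD' hDD'
        have hDX : D ⊆ X := (decomp_mem hD).2.trans Finset.inter_subset_left
        have hD'X : D' ⊆ X := (decomp_mem hD').2.trans Finset.inter_subset_left
        -- badPair X E
        have hbadXE : badPair S B X E := by
          refine ⟨hXB, hEB, ?_, ?_, ?_, ?_, ?_⟩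
          · exact hDne.mono (Finset.subset_inter hDX hDE)
          · exact fun h => hXY (h.trans (hEW.trans hWY))
          · intro h
            have hEC : E ⊆ X ∩ Y := Finset.subset_inter h (hEW.trans hWY)
            have : D = E := decomp_max hD E hEB hEC hDE
            obtain ⟨z, hz⟩ := hD'ne
            have : z ∈ D ∩ D' := Finset.mem_inter.2 ⟨this ▸ hD'E hz, hz⟩
            rw [hDdisj] at this
            exact absurd this (Finset.notMem_empty _)
          · intro hXEB
            have hXEC : X ∩ E ⊆ X ∩ Y :=
              Finset.inter_subset_inter (Finset.Subset.refl X) (hEW.trans hWY)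
            have hDXE : D ⊆ X ∩ E := Finset.subset_inter hDX hDE
            have : D = X ∩ E := decomp_max hD _ hXEB hXEC hDXE
            obtain ⟨z, hz⟩ := hD'ne
            have : z ∈ D ∩ D' := Finset.mem_inter.2
              ⟨this ▸ Finset.mem_inter.2 ⟨hD'X hz, hD'E hz⟩, hz⟩
            rw [hDdisj] at this
            exact absurd this (Finset.notMem_empty _)
          · left
            intro hE
            have : q ∈ X ∪ E := hE ▸ hqS
            rcases Finset.mem_union.1 this with h | h
            · exact hqX h
            · exact hqA (hWA (hEW h))
        have hlt : mea S X E < mea S X Y := by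
          apply mea_lt_of_card_lt
          rw [← hVdef]
          have hsub : X ∪ E ⊆ V.erase q :=
            Finset.union_subset hXq ((hEW.trans hWA).trans hAe)
          have h1 := Finset.card_le_card hsub
          have h2 : (V.erase q).card < V.card :=
            Finset.card_erase_lt_of_mem (Finset.mem_union.2 (Or.inr hqY))
          omega
        exact absurd (hmin X E hbadXE) (by omega)
      · exact Or.inl (hAY ▸ hVSeq)
  -- Step 3: conclude A = X by maximality of |X| + |Y|
  have hmea := hmin A Y hbadAY
  have hcardA : A.card ≤ X.card := by
    unfold mea at hmea
    rw [hAY] at hmea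
    rw [← hVdef] at hmea
    have hXY2s := card_add_le hb hXB hYB
    have hAY2s := card_add_le hb hAB hYB
    omega
  exact (Finset.eq_of_subset_of_card_le hXA hcardA).symm

lemma extremal_pair (hb : IsBuilding S B) (hconn : Bmax B = {S})
    (hex : ∃ X Y, badPair S B X Y) :
    ∃ X Y, badPair S B X Y ∧
      (∀ q ∈ Y \ X, ∀ K ∈ B, X ⊆ K → K ⊆ (X ∪ Y).erase q → K = X) ∧
      (∀ p ∈ X \ Y, ∀ K ∈ B, Y ⊆ K → K ⊆ (X ∪ Y).erase p → K = Y) := by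
  classical
  obtain ⟨X0, Y0, hbad0⟩ := hex
  set P := (B ×ˢ B).filter (fun z => badPair S B z.1 z.2) with hPdef
  have hne : P.Nonempty := ⟨(X0, Y0), by
    rw [hPdef, Finset.mem_filter, Finset.mem_product]
    exact ⟨⟨hbad0.1, hbad0.2.1⟩, hbad0⟩⟩
  obtain ⟨z, hz, hminz⟩ := Finset.exists_min_image P (fun z => mea S z.1 z.2) hne
  rw [hPdef, Finset.mem_filter] at hz
  have hbad := hz.2
  have hmin : ∀ X' Y', badPair S B X' Y' → mea S z.1 z.2 ≤ mea S X' Y' := by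
    intro X' Y' h
    refine hminz (X', Y') ?_
    rw [hPdef, Finset.mem_filter, Finset.mem_product]
    exact ⟨⟨h.1, h.2.1⟩, h⟩
  refine ⟨z.1, z.2, hbad, extremal_max hb hconn hbad hmin, ?_⟩
  have hbadsymm := badPair_symm hbad
  have hminsymm : ∀ X' Y', badPair S B X' Y' → mea S z.2 z.1 ≤ mea S X' Y' := by
    intro X' Y' h
    rw [← mea_symm]
    exact hmin X' Y' h
  intro p hp K hKB hYK hKe
  rw [Finset.union_comm] at hKe
  exact extremal_max hb hconn hbadsymm hminsymm p hp K hKB hYK hKe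

-- ## eSet algebra

lemma eSet_union_inter (n : ℕ) (X Y : Finset ℕ) :
    eSet n (X ∪ Y) + eSet n (X ∩ Y) = eSet n X + eSet n Y := by
  unfold eSet
  exact Finset.sum_union_inter

lemma eSet_decomp (hb : IsBuilding S B) {T : Finset ℕ} (hTS : T ⊆ S) (n : ℕ) :
    ∑ D ∈ Bmax (restrict B T), eSet n D = eSet n T := by
  have hdisj : (↑(Bmax (restrict B T)) : Set (Finset ℕ)).PairwiseDisjoint id := by
    intro a ha b hb' hne
    simp only [Finset.mem_coe] at ha hb'
    rw [Function.onFun, Finset.disjoint_left]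
    intro z hza hzb
    have hd := decomp_disj hb ha hb' hne
    have hyy : z ∈ a ∩ b := Finset.mem_inter.2 ⟨hza, hzb⟩
    rw [hd] at hyy
    exact absurd hyy (Finset.notMem_empty _)
  conv_rhs => rw [eSet, ← decomp_biUnion hb hTS]
  rw [Finset.sum_biUnion hdisj]
  rfl

lemma eSet_full (n : ℕ) : eSet n (Finset.Icc 1 (n + 1)) = 0 := by
  funext j
  have hstep : ∀ i ∈ Finset.Icc 1 n, eVec n i j = if i = (j : ℕ) + 1 then 1 else 0 := by
    intro i hi
    rw [Finset.mem_Icc] at hi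
    have hne : i ≠ n + 1 := by omega
    simp only [eVec, hne, if_false]
  have hsplit : Finset.Icc 1 (n + 1) = insert (n + 1) (Finset.Icc 1 n) := by
    ext i
    simp only [Finset.mem_Icc, Finset.mem_insert]
    omega
  have hnotmem : n + 1 ∉ Finset.Icc 1 n := by simp
  have hlast : eVec n (n + 1) j = -1 := by
    have : n + 1 ≠ (j : ℕ) + 1 := by have := j.isLt; omega
    simp only [eVec, this, if_false, if_true]
  have hjmem : (j : ℕ) + 1 ∈ Finset.Icc 1 n := by
    have := j.isLt; rw [Finset.mem_Icc]; omega
  have happ : eSet n (Finset.Icc 1 (n + 1)) j = ∑ i ∈ Finset.Icc 1 (n + 1), eVec n i j := by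
    simp [eSet]
  rw [Pi.zero_apply, happ, hsplit, Finset.sum_insert hnotmem, hlast, Finset.sum_congr rfl hstep,
    Finset.sum_ite_eq' (Finset.Icc 1 n) ((j : ℕ) + 1) (fun _ => (1 : ℝ)), if_pos hjmem]
  ring

-- ## Auxiliary: nested sets restrict

lemma isNested_subset {B W N : Finset (Finset ℕ)} (h : IsNested B W) (hsub : N ⊆ W) :
    IsNested B N :=
  ⟨hsub.trans h.1, fun I hI J hJ => h.2.1 I (hsub hI) J (hsub hJ),
    fun F hF => h.2.2 F (hF.trans hsub)⟩


/-- Direction (1) ⇒ (2) of the main theorem, combinatorially: if the building-set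
condition fails, some torus-invariant curve has anticanonical degree ≤ -1. -/
theorem stmt_2 (n : ℕ) (B : Finset (Finset ℕ))
    (hB : IsBuilding (Finset.Icc 1 (n + 1)) B)
    (hconn : Bmax B = {Finset.Icc 1 (n + 1)})
    (I₁ I₂ : Finset ℕ) (hI₁ : I₁ ∈ B) (hI₂ : I₂ ∈ B)
    (hint : (I₁ ∩ I₂).Nonempty) (h12 : ¬I₁ ⊆ I₂) (h21 : ¬I₂ ⊆ I₁)
    (hcap : I₁ ∩ I₂ ∉ B)
    (hbad : I₁ ∪ I₂ ≠ Finset.Icc 1 (n + 1) ∨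
      3 ≤ (Bmax (restrict B (I₁ ∩ I₂))).card) :
    ∃ N : Finset (Finset ℕ), IsNested B N ∧
      ∃ J₁ ∈ B, ∃ J₂ ∈ B, J₁ ≠ J₂ ∧
        J₁ ≠ Finset.Icc 1 (n + 1) ∧ J₂ ≠ Finset.Icc 1 (n + 1) ∧
        MaxNested B (insert J₁ N) ∧ MaxNested B (insert J₂ N) ∧
        ∃ a : Finset ℕ → ℤ,
          eSet n J₁ + eSet n J₂ + ∑ J ∈ N, (a J : ℝ) • eSet n J = 0 ∧
          2 + ∑ J ∈ N, a J ≤ -1 := by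
  classical
  set S := Finset.Icc 1 (n + 1) with hSdef
  have hSB : S ∈ B := S_mem_B hconn
  -- extremal bad pair
  obtain ⟨X, Y, hbadXY, hmaxX, hmaxY⟩ := extremal_pair hB hconn
    ⟨I₁, I₂, hI₁, hI₂, hint, h12, h21, hcap, hbad⟩
  obtain ⟨hXB, hYB, hXYne, hXY, hYX, hXYB, hlast⟩ := hbadXY
  obtain ⟨q, hqY, hqX⟩ := Finset.not_subset.1 hYX
  obtain ⟨p, hpX, hpY⟩ := Finset.not_subset.1 hXY
  set V := X ∪ Y with hVdef
  have hVB : V ∈ B := hB.2.1 X hXB Y hYB hXYne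
  have hXS : X ⊆ S := mem_B_subset hB hXB
  have hYS : Y ⊆ S := mem_B_subset hB hYB
  have hVS : V ⊆ S := mem_B_subset hB hVB
  have hqS : q ∈ S := hYS hqY
  have hpS : p ∈ S := hXS hpX
  have hXV : X ⊆ V := Finset.subset_union_left
  have hYV : Y ⊆ V := Finset.subset_union_right
  have hqV : q ∈ V := hYV hqY
  have hpV : p ∈ V := hXV hpX
  have hXeq : X ⊆ V.erase q := fun z hz =>
    Finset.mem_erase.2 ⟨fun h => hqX (h ▸ hz), hXV hz⟩
  have hYep : Y ⊆ V.erase p := fun z hz =>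
    Finset.mem_erase.2 ⟨fun h => hpY (h ▸ hz), hYV hz⟩
  have hXssV : X ⊂ V := Finset.ssubset_iff_of_subset hXV |>.2 ⟨q, hqV, hqX⟩
  have hYssV : Y ⊂ V := Finset.ssubset_iff_of_subset hYV |>.2 ⟨p, hpV, hpY⟩
  have hXneS : X ≠ S := fun h => hqX (h ▸ hqS)
  have hYneS : Y ≠ S := fun h => hpY (h ▸ hpS)
  -- goodness of Y
  have hgoodY : ∀ K ∈ B, K ⊆ V.erase p → (K ∩ Y).Nonempty → K ⊆ Y := by
    intro K hKB hKe hKY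
    have hu : K ∪ Y ∈ B := hB.2.1 K hKB Y hYB hKY
    have hue : K ∪ Y ⊆ V.erase p := Finset.union_subset hKe hYep
    have := hmaxY p (Finset.mem_sdiff.2 ⟨hpX, hpY⟩) (K ∪ Y) hu
      Finset.subset_union_right hue
    exact (this ▸ Finset.subset_union_left : K ⊆ K ∪ Y).trans this.le
  -- the component decomposition at level V (in the first tree)
  set F := Bmax (restrict B (V.erase q)) with hFdef
  have hXF : X ∈ F := by
    refine mem_Bmax_iff.2 ⟨mem_restrict_iff.2 ⟨hXB, hXeq⟩, ?_⟩
    intro J hJ hXJ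
    obtain ⟨hJB, hJe⟩ := mem_restrict_iff.1 hJ
    exact (hmaxX q (Finset.mem_sdiff.2 ⟨hqY, hqX⟩) J hJB hXJ hJe).symm
  have hFfacts : ∀ A ∈ F, A ∈ B ∧ A ⊆ V.erase q := fun A hA => decomp_mem hA
  have hFdisj : ∀ A ∈ F, ∀ A' ∈ F, A ≠ A' → A ∩ A' = ∅ :=
    fun A hA A' hA' h => decomp_disj hB hA hA' h
  -- subtree below X with private vertex p
  obtain ⟨MX, hMXa, hMXc, hMXp1, hMXcov⟩ := sub_exists hB X.card X le_rfl hXB p hpX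
  -- subtrees below the other components
  set D := F.erase X with hDdef
  have hrecD : ∀ A ∈ D, ∃ x, x ∈ A ∧ ∃ MA, SubGood B A x MA := by
    intro A hA
    have hAB : A ∈ B := (hFfacts A (Finset.mem_of_mem_erase hA)).1
    have hAne : A.Nonempty := mem_B_nonempty hB hAB
    exact ⟨A.min' hAne, A.min'_mem hAne,
      sub_exists hB A.card A le_rfl hAB _ (A.min'_mem hAne)⟩
  choose xf hxf Mf hMf using hrecD
  -- the outer chain
  obtain ⟨x₀, Mch, r1, r2, r3, r4, r5, rS, rV⟩ : ∃ (x₀ : ℕ) (Mch : Finset (Finset ℕ)),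
      (∀ K ∈ Mch, K ∈ B ∧ K ⊆ S.erase x₀) ∧
      (∀ K ∈ Mch, ∀ L ∈ Mch, K ⊆ L ∨ L ⊆ K ∨ K ∩ L = ∅) ∧
      (∀ K ∈ Mch, ¬ K ⊂ V) ∧
      (∀ K ∈ Mch, V ⊆ K ∨ K ∩ V = ∅) ∧
      (∀ L ∈ Mch, L ≠ V → ∃ y, y ∈ L ∧ y ∉ V ∧ (∀ K ∈ Mch, K ⊂ L → y ∉ K) ∧
          (∀ K ∈ B, K ⊆ L.erase y → ∃ K' ∈ Mch, K' ⊂ L ∧ K ⊆ K')) ∧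
      (V = S → Mch = ∅) ∧
      (V ≠ S → V ∈ Mch ∧ x₀ ∉ V ∧ x₀ ∈ S ∧ ∀ K ∈ B, K ⊆ S.erase x₀ → ∃ K' ∈ Mch, K ⊆ K') := by
    by_cases hVSeq : V = S
    · refine ⟨0, (∅ : Finset (Finset ℕ)), ?_, ?_, ?_, ?_, ?_, fun _ => rfl,
        fun h => absurd hVSeq h⟩ <;> intro K hK <;> exact absurd hK (Finset.notMem_empty _)
    · have hVssS : V ⊂ S := Finset.ssubset_iff_subset_ne.2 ⟨hVS, hVSeq⟩
      obtain ⟨x₀, hx₀S, hx₀V, Mch, c1, c2, cV, c4, c5, c6⟩ :=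
        chain_exists hB S.card S le_rfl hSB V hVB hVssS
      refine ⟨x₀, Mch, c1, c2, c4, ?_, c5, fun h => absurd h hVSeq,
        fun _ => ⟨cV, hx₀V, hx₀S, c6⟩⟩
      intro K hK
      rcases c2 K hK V cV with h | h | h
      · rcases eq_or_ne K V with heq | hne
        · exact Or.inl heq.ge
        · exact absurd (Finset.ssubset_iff_subset_ne.2 ⟨h, hne⟩) (c4 K hK)
      · exact Or.inl h
      · exact Or.inr h
  have hXnotMch : X ∉ Mch := fun h => r3 X h hXssV
  have hYnotMch : Y ∉ Mch := fun h => r3 Y h hYssV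
  -- the two walls
  set MV : Finset (Finset ℕ) := F ∪ MX ∪ D.attach.biUnion (fun a => Mf a.1 a.2) with hMVdef
  set W1 : Finset (Finset ℕ) := Mch ∪ MV with hW1def
  set N : Finset (Finset ℕ) := W1.erase X with hNdef
  set W2 : Finset (Finset ℕ) := insert Y N with hW2def
  have hmemMV : ∀ K, K ∈ MV ↔ K ∈ F ∨ K ∈ MX ∨ ∃ (A : Finset ℕ) (hA : A ∈ D), K ∈ Mf A hA := by
    intro K
    simp only [hMVdef, Finset.mem_union, Finset.mem_biUnion, Finset.mem_attach, true_and]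
    constructor
    · rintro ((h | h) | ⟨⟨A, hA⟩, hK⟩)
      · exact Or.inl h
      · exact Or.inr (Or.inl h)
      · exact Or.inr (Or.inr ⟨A, hA, hK⟩)
    · rintro (h | h | ⟨A, hA, hK⟩)
      · exact Or.inl (Or.inl h)
      · exact Or.inl (Or.inr h)
      · exact Or.inr ⟨⟨A, hA⟩, hK⟩
  have hmemW1 : ∀ K, K ∈ W1 ↔ K ∈ Mch ∨ K ∈ MV := fun K => Finset.mem_union
  -- basic facts about members
  have hMXsub : ∀ K ∈ MX, K ⊆ X.erase p := fun K hK => (hMXa K hK).2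
  have hMXsubX : ∀ K ∈ MX, K ⊆ X := fun K hK => (hMXsub K hK).trans (Finset.erase_subset _ _)
  have hsub1 : ∀ (A : Finset ℕ) (hA : A ∈ D), ∀ K ∈ Mf A hA, K ∈ B ∧ K ⊆ A.erase (xf A hA) :=
    fun A hA => (hMf A hA).1
  have hsubA : ∀ (A : Finset ℕ) (hA : A ∈ D), ∀ K ∈ Mf A hA, K ⊆ A :=
    fun A hA K hK => (hsub1 A hA K hK).2.trans (Finset.erase_subset _ _)
  have hMVfacts : ∀ K ∈ MV, K ∈ B ∧ K ⊆ V.erase q := by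
    intro K hK
    rcases (hmemMV K).1 hK with h | h | ⟨A, hA, h⟩
    · exact hFfacts K h
    · exact ⟨(hMXa K h).1, (hMXsubX K h).trans hXeq⟩
    · exact ⟨(hsub1 A hA K h).1,
        (hsubA A hA K h).trans (hFfacts A (Finset.mem_of_mem_erase hA)).2⟩
  have hW1B : ∀ K ∈ W1, K ∈ B ∧ K ≠ S := by
    intro K hK
    rcases (hmemW1 K).1 hK with h | h
    · refine ⟨(r1 K h).1, ?_⟩
      by_cases hVSeq : V = S
      · rw [rS hVSeq] at h; exact absurd h (Finset.notMem_empty _)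
      · obtain ⟨_, _, hx₀S, _⟩ := rV hVSeq
        exact fun hE => (Finset.mem_erase.1 ((r1 K h).2 (hE ▸ hx₀S))).1 rfl
    · refine ⟨(hMVfacts K h).1, ?_⟩
      exact fun hE => (Finset.mem_erase.1 ((hMVfacts K h).2 (hE ▸ hqS))).1 rfl
  have hW1ne : ∀ K ∈ W1, K.Nonempty := fun K hK => mem_B_nonempty hB (hW1B K hK).1
  have hMVne : ∀ K ∈ MV, K.Nonempty :=
    fun K hK => hW1ne K ((hmemW1 K).2 (Or.inr hK))
  -- container components
  have hcont : ∀ K ∈ MV, ∃ A ∈ F, K ⊆ A ∧ (K ≠ A → K ∉ F) := by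
    intro K hK
    rcases (hmemMV K).1 hK with h | h | ⟨A, hA, h⟩
    · exact ⟨K, h, Finset.Subset.refl K, fun hne => absurd rfl hne⟩
    · refine ⟨X, hXF, hMXsubX K h, ?_⟩
      intro hne hKF
      obtain ⟨y, hy⟩ := hMVne K hK
      have hd := hFdisj K hKF X hXF hne
      have hyy : y ∈ K ∩ X := Finset.mem_inter.2 ⟨hy, hMXsubX K h hy⟩
      rw [hd] at hyy
      exact absurd hyy (Finset.notMem_empty _)
    · have hAF : A ∈ F := Finset.mem_of_mem_erase hA
      refine ⟨A, hAF, hsubA A hA K h, ?_⟩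
      intro hne hKF
      obtain ⟨y, hy⟩ := hMVne K hK
      have hd := hFdisj K hKF A hAF hne
      have hyy : y ∈ K ∩ A := Finset.mem_inter.2 ⟨hy, hsubA A hA K h hy⟩
      rw [hd] at hyy
      exact absurd hyy (Finset.notMem_empty _)
  -- pairwise compatibility inside MV
  have hcompatMV : ∀ K ∈ MV, ∀ L ∈ MV, K ⊆ L ∨ L ⊆ K ∨ K ∩ L = ∅ := by
    intro K hK L hL
    obtain ⟨AK, hAK, hKAK, hKonly⟩ := hcont K hK
    obtain ⟨AL, hAL, hLAL, hLonly⟩ := hcont L hL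
    by_cases hAA : AK = AL
    · subst hAA
      rcases (hmemMV K).1 hK with h | h | ⟨A, hA, h⟩ <;>
        rcases (hmemMV L).1 hL with h' | h' | ⟨A', hA', h'⟩
      · by_cases hKL : K = L
        · exact Or.inl (hKL ▸ Finset.Subset.refl K)
        · exact Or.inr (Or.inr (hFdisj K h L h' hKL))
      · by_cases hKL : K = AK
        · exact Or.inr (Or.inl (hKL ▸ hLAL))
        · exact absurd h (hKonly hKL)
      · by_cases hKL : K = AK
        · exact Or.inr (Or.inl (hKL ▸ hLAL))
        · exact absurd h (hKonly hKL)
      · by_cases hKL : L = AK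
        · exact Or.inl (hKL ▸ hKAK)
        · exact absurd h' (hLonly hKL)
      · exact hMXc K h L h'
      · -- K ∈ MX (container X), L ∈ Mf A' with A' ≠ X, same container: impossible
        exfalso
        have hA'F : A' ∈ F := Finset.mem_of_mem_erase hA'
        obtain ⟨y, hy⟩ := hMVne K hK
        obtain ⟨y', hy'⟩ := hMVne L hL
        have hXAK : X = AK := by
          by_contra hne
          have hd := hFdisj X hXF AK hAK hne
          have hyy : y ∈ X ∩ AK := Finset.mem_inter.2 ⟨hMXsubX K h hy, hKAK hy⟩
          rw [hd] at hyy
          exact absurd hyy (Finset.notMem_empty _)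
        have hA'AK : A' = AK := by
          by_contra hne
          have hd := hFdisj A' hA'F AK hAK hne
          have hyy : y' ∈ A' ∩ AK := Finset.mem_inter.2 ⟨hsubA A' hA' L h' hy', hLAL hy'⟩
          rw [hd] at hyy
          exact absurd hyy (Finset.notMem_empty _)
        exact (Finset.mem_erase.1 hA').1 (hA'AK.trans hXAK.symm)
      · by_cases hKL : L = AK
        · exact Or.inl (hKL ▸ hKAK)
        · exact absurd h' (hLonly hKL)
      · exfalso
        have hAF : A ∈ F := Finset.mem_of_mem_erase hA
        obtain ⟨y, hy⟩ := hMVne K hK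
        obtain ⟨y', hy'⟩ := hMVne L hL
        have hAAK : A = AK := by
          by_contra hne
          have hd := hFdisj A hAF AK hAK hne
          have hyy : y ∈ A ∩ AK := Finset.mem_inter.2 ⟨hsubA A hA K h hy, hKAK hy⟩
          rw [hd] at hyy
          exact absurd hyy (Finset.notMem_empty _)
        have hXAK : X = AK := by
          by_contra hne
          have hd := hFdisj X hXF AK hAK hne
          have hyy : y' ∈ X ∩ AK := Finset.mem_inter.2 ⟨hMXsubX L h' hy', hLAL hy'⟩
          rw [hd] at hyy
          exact absurd hyy (Finset.notMem_empty _)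
        exact (Finset.mem_erase.1 hA).1 (hAAK.trans hXAK.symm)
      · have hAF : A ∈ F := Finset.mem_of_mem_erase hA
        have hA'F : A' ∈ F := Finset.mem_of_mem_erase hA'
        by_cases hAA' : A = A'
        · subst hAA'
          exact (hMf A hA).2.1 K h L h'
        · exfalso
          obtain ⟨y, hy⟩ := hMVne K hK
          obtain ⟨y', hy'⟩ := hMVne L hL
          have hAAK : A = AK := by
            by_contra hne
            have hd := hFdisj A hAF AK hAK hne
            have hyy : y ∈ A ∩ AK := Finset.mem_inter.2 ⟨hsubA A hA K h hy, hKAK hy⟩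
            rw [hd] at hyy
            exact absurd hyy (Finset.notMem_empty _)
          have hA'AK : A' = AK := by
            by_contra hne
            have hd := hFdisj A' hA'F AK hAK hne
            have hyy : y' ∈ A' ∩ AK := Finset.mem_inter.2 ⟨hsubA A' hA' L h' hy', hLAL hy'⟩
            rw [hd] at hyy
            exact absurd hyy (Finset.notMem_empty _)
          exact hAA' (hAAK.trans hA'AK.symm)
    · refine Or.inr (Or.inr (Finset.subset_empty.1 ?_))
      have hd := hFdisj AK hAK AL hAL hAA
      exact hd ▸ Finset.inter_subset_inter hKAK hLAL
  -- pairwise compatibility in W1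
  have hMVV : ∀ K ∈ MV, K ⊆ V :=
    fun K hK => ((hMVfacts K hK).2).trans (Finset.erase_subset _ _)
  have hcompatW1 : ∀ K ∈ W1, ∀ L ∈ W1, K ⊆ L ∨ L ⊆ K ∨ K ∩ L = ∅ := by
    intro K hK L hL
    rcases (hmemW1 K).1 hK with h | h <;> rcases (hmemW1 L).1 hL with h' | h'
    · exact r2 K h L h'
    · rcases r4 K h with hc | hc
      · exact Or.inr (Or.inl ((hMVV L h').trans hc))
      · refine Or.inr (Or.inr (Finset.subset_empty.1 ?_))
        exact hc ▸ Finset.inter_subset_inter (Finset.Subset.refl K) (hMVV L h')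
    · rcases r4 L h' with hc | hc
      · exact Or.inl ((hMVV K h).trans hc)
      · refine Or.inr (Or.inr (Finset.subset_empty.1 ?_))
        rw [Finset.inter_comm]
        exact hc ▸ Finset.inter_subset_inter (Finset.Subset.refl L) (hMVV K h)
    · exact hcompatMV K h L h'
  -- membership lifts
  have hMchW1 : ∀ K ∈ Mch, K ∈ W1 := fun K h => (hmemW1 K).2 (Or.inl h)
  have hFW1 : ∀ K ∈ F, K ∈ W1 := fun K h => (hmemW1 K).2 (Or.inr ((hmemMV K).2 (Or.inl h)))
  have hMXW1 : ∀ K ∈ MX, K ∈ W1 :=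
    fun K h => (hmemW1 K).2 (Or.inr ((hmemMV K).2 (Or.inr (Or.inl h))))
  have hMfW1 : ∀ (A : Finset ℕ) (hA : A ∈ D), ∀ K ∈ Mf A hA, K ∈ W1 :=
    fun A hA K h => (hmemW1 K).2 (Or.inr ((hmemMV K).2 (Or.inr (Or.inr ⟨A, hA, h⟩))))
  have hFltV : ∀ A ∈ F, A ⊂ V := fun A hA =>
    Finset.ssubset_of_subset_of_ssubset (hFfacts A hA).2 (Finset.erase_ssubset hqV)
  have hq_notMV : ∀ K ∈ MV, q ∉ K :=
    fun K hK hqK => (Finset.mem_erase.1 ((hMVfacts K hK).2 hqK)).1 rfl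
  -- P1 for W1
  have hP1W1 : ∀ L, (L ∈ W1 ∨ L = S) → P1cond B W1 L := by
    intro L hLmem
    rcases hLmem with hLW | rfl
    · rcases (hmemW1 L).1 hLW with hLMch | hLMV
      · by_cases hLV : L = V
        · subst hLV
          refine ⟨q, hqV, ?_, ?_⟩
          · intro K hK hKV
            rcases (hmemW1 K).1 hK with h | h
            · exact absurd hKV (r3 K h)
            · exact fun hqK => hq_notMV K h hqK
          · intro K hKB hKe
            obtain ⟨A, hAF, hKA⟩ := exists_max_restrict hB hKB hKe
            exact ⟨A, hFW1 A hAF, hFltV A hAF, hKA⟩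
        · obtain ⟨y, hyL, hyV, hy1, hy2⟩ := r5 L hLMch hLV
          refine ⟨y, hyL, ?_, ?_⟩
          · intro K hK hKL
            rcases (hmemW1 K).1 hK with h | h
            · exact hy1 K h hKL
            · exact fun hyK => hyV (hMVV K h hyK)
          · intro K hKB hKe
            obtain ⟨K', hK', hK'L, hKK'⟩ := hy2 K hKB hKe
            exact ⟨K', hMchW1 K' hK', hK'L, hKK'⟩
      · rcases (hmemMV L).1 hLMV with hLF | hLMX | ⟨A, hA, hLMf⟩
        · by_cases hLX : L = X
          · subst hLX
            refine ⟨p, hpX, ?_, ?_⟩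
            · intro K hK hKL
              rcases (hmemW1 K).1 hK with h | h
              · exact absurd (Finset.ssubset_of_ssubset_of_subset hKL hXV) (r3 K h)
              · rcases (hmemMV K).1 h with h' | h' | ⟨A', hA', h'⟩
                · by_cases hKX : K = L
                  · exact absurd (hKX ▸ hKL) (ssubset_irrefl _)
                  · intro hpK
                    have hd := hFdisj K h' L hLF hKX
                    have hyy : p ∈ K ∩ L := Finset.mem_inter.2 ⟨hpK, hpX⟩
                    rw [hd] at hyy
                    exact absurd hyy (Finset.notMem_empty _)
                · exact fun hpK => (Finset.mem_erase.1 (hMXsub K h' hpK)).1 rfl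
                · intro hpK
                  have hA'F : A' ∈ F := Finset.mem_of_mem_erase hA'
                  have hd := hFdisj A' hA'F L hLF (Finset.mem_erase.1 hA').1
                  have hyy : p ∈ A' ∩ L := Finset.mem_inter.2 ⟨hsubA A' hA' K h' hpK, hpX⟩
                  rw [hd] at hyy
                  exact absurd hyy (Finset.notMem_empty _)
            · intro K hKB hKe
              obtain ⟨K', hK', hKK'⟩ := hMXcov K hKB hKe
              refine ⟨K', hMXW1 K' hK', ?_, hKK'⟩
              exact Finset.ssubset_of_subset_of_ssubset (hMXsub K' hK')
                (Finset.erase_ssubset hpX)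
          · have hLD : L ∈ D := Finset.mem_erase.2 ⟨hLX, hLF⟩
            refine ⟨xf L hLD, hxf L hLD, ?_, ?_⟩
            · intro K hK hKL
              rcases (hmemW1 K).1 hK with h | h
              · exact absurd (Finset.ssubset_of_ssubset_of_subset hKL (hFltV L hLF).1) (r3 K h)
              · rcases (hmemMV K).1 h with h' | h' | ⟨A', hA', h'⟩
                · by_cases hKX : K = L
                  · exact absurd (hKX ▸ hKL) (ssubset_irrefl _)
                  · intro hxK
                    have hd := hFdisj K h' L hLF hKX
                    have hyy : xf L hLD ∈ K ∩ L := Finset.mem_inter.2 ⟨hxK, hxf L hLD⟩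
                    rw [hd] at hyy
                    exact absurd hyy (Finset.notMem_empty _)
                · intro hxK
                  have hd := hFdisj X hXF L hLF (fun hE => hLX hE.symm)
                  have hyy : xf L hLD ∈ X ∩ L :=
                    Finset.mem_inter.2 ⟨hMXsubX K h' hxK, hxf L hLD⟩
                  rw [hd] at hyy
                  exact absurd hyy (Finset.notMem_empty _)
                · by_cases hAL : A' = L
                  · subst hAL
                    exact fun hxK => (Finset.mem_erase.1 ((hsub1 A' hA' K h').2 hxK)).1 rfl
                  · intro hxK
                    have hA'F : A' ∈ F := Finset.mem_of_mem_erase hA'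
                    have hd := hFdisj A' hA'F L hLF hAL
                    have hyy : xf L hLD ∈ A' ∩ L :=
                      Finset.mem_inter.2 ⟨hsubA A' hA' K h' hxK, hxf L hLD⟩
                    rw [hd] at hyy
                    exact absurd hyy (Finset.notMem_empty _)
            · intro K hKB hKe
              obtain ⟨K', hK', hKK'⟩ := (hMf L hLD).2.2.2 K hKB hKe
              refine ⟨K', hMfW1 L hLD K' hK', ?_, hKK'⟩
              exact Finset.ssubset_of_subset_of_ssubset ((hsub1 L hLD K' hK').2)
                (Finset.erase_ssubset (hxf L hLD))
        · -- L inside MX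
          obtain ⟨y, hyL, hy1, hy2⟩ := hMXp1 L hLMX
          have hLXe : L ⊆ X.erase p := hMXsub L hLMX
          have hLssX : L ⊂ X :=
            Finset.ssubset_of_subset_of_ssubset hLXe (Finset.erase_ssubset hpX)
          refine ⟨y, hyL, ?_, ?_⟩
          · intro K hK hKL
            have hKX : K ⊆ X := hKL.1.trans hLssX.1
            rcases (hmemW1 K).1 hK with h | h
            · exact absurd (Finset.ssubset_of_ssubset_of_subset hKL (hLssX.1.trans hXV))
                (r3 K h)
            · rcases (hmemMV K).1 h with h' | h' | ⟨A', hA', h'⟩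
              · by_cases hKX' : K = X
                · exact absurd (hKX' ▸ hKL) (fun hE => (ssubset_irrefl X)
                    (Finset.ssubset_of_ssubset_of_subset hE hLssX.1))
                · intro hyK
                  have hd := hFdisj K h' X hXF hKX'
                  have hyy : y ∈ K ∩ X := Finset.mem_inter.2 ⟨hyK, hKX hyK⟩
                  rw [hd] at hyy
                  exact absurd hyy (Finset.notMem_empty _)
              · exact hy1 K h' hKL
              · intro hyK
                have hA'F : A' ∈ F := Finset.mem_of_mem_erase hA'
                have hd := hFdisj A' hA'F X hXF (Finset.mem_erase.1 hA').1
                have hyy : y ∈ A' ∩ X := Finset.mem_inter.2 ⟨hsubA A' hA' K h' hyK, hKX hyK⟩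
                rw [hd] at hyy
                exact absurd hyy (Finset.notMem_empty _)
          · intro K hKB hKe
            obtain ⟨K', hK', hK'L, hKK'⟩ := hy2 K hKB hKe
            exact ⟨K', hMXW1 K' hK', hK'L, hKK'⟩
        · -- L inside Mf A
          have hAF : A ∈ F := Finset.mem_of_mem_erase hA
          have hAX : A ≠ X := (Finset.mem_erase.1 hA).1
          obtain ⟨y, hyL, hy1, hy2⟩ := (hMf A hA).2.2.1 L hLMf
          have hLA : L ⊆ A := hsubA A hA L hLMf
          refine ⟨y, hyL, ?_, ?_⟩
          · intro K hK hKL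
            have hKA : K ⊆ A := hKL.1.trans hLA
            rcases (hmemW1 K).1 hK with h | h
            · exact absurd (Finset.ssubset_of_ssubset_of_subset hKL
                (hLA.trans (hFltV A hAF).1)) (r3 K h)
            · rcases (hmemMV K).1 h with h' | h' | ⟨A', hA', h'⟩
              · by_cases hKA' : K = A
                · subst hKA'
                  exact absurd (Finset.ssubset_of_ssubset_of_subset hKL hLA) (ssubset_irrefl _)
                · intro hyK
                  have hd := hFdisj K h' A hAF hKA'
                  have hyy : y ∈ K ∩ A := Finset.mem_inter.2 ⟨hyK, hKA hyK⟩
                  rw [hd] at hyy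
                  exact absurd hyy (Finset.notMem_empty _)
              · intro hyK
                have hd := hFdisj X hXF A hAF (fun hE => hAX hE.symm)
                have hyy : y ∈ X ∩ A := Finset.mem_inter.2 ⟨hMXsubX K h' hyK, hKA hyK⟩
                rw [hd] at hyy
                exact absurd hyy (Finset.notMem_empty _)
              · by_cases hAA' : A' = A
                · subst hAA'
                  exact hy1 K h' hKL
                · intro hyK
                  have hA'F : A' ∈ F := Finset.mem_of_mem_erase hA'
                  have hd := hFdisj A' hA'F A hAF hAA'
                  have hyy : y ∈ A' ∩ A := Finset.mem_inter.2 ⟨hsubA A' hA' K h' hyK, hKA hyK⟩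
                  rw [hd] at hyy
                  exact absurd hyy (Finset.notMem_empty _)
          · intro K hKB hKe
            obtain ⟨K', hK', hK'L, hKK'⟩ := hy2 K hKB hKe
            exact ⟨K', hMfW1 A hA K' hK', hK'L, hKK'⟩
    · -- L = S
      by_cases hVSeq : V = S
      · refine ⟨q, hqS, ?_, ?_⟩
        · intro K hK _
          rcases (hmemW1 K).1 hK with h | h
          · rw [rS hVSeq] at h
            exact absurd h (Finset.notMem_empty _)
          · exact fun hqK => hq_notMV K h hqK
        · intro K hKB hKe
          rw [← hVSeq] at hKe
          obtain ⟨A, hAF, hKA⟩ := exists_max_restrict hB hKB hKe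
          exact ⟨A, hFW1 A hAF, hVSeq ▸ hFltV A hAF, hKA⟩
      · obtain ⟨hVMch, hx₀V, hx₀S, hcov⟩ := rV hVSeq
        refine ⟨x₀, hx₀S, ?_, ?_⟩
        · intro K hK _
          rcases (hmemW1 K).1 hK with h | h
          · exact fun hxK => (Finset.mem_erase.1 ((r1 K h).2 hxK)).1 rfl
          · exact fun hxK => hx₀V (hMVV K h hxK)
        · intro K hKB hKe
          obtain ⟨K', hK', hKK'⟩ := hcov K hKB hKe
          refine ⟨K', hMchW1 K' hK', ?_, hKK'⟩
          have hK'S : K' ⊆ S.erase x₀ := (r1 K' hK').2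
          exact Finset.ssubset_of_subset_of_ssubset hK'S (Finset.erase_ssubset hx₀S)
  have hGoodW1 : GoodW S B W1 := ⟨hW1B, hcompatW1, hP1W1⟩
  -- ## The second wall W2
  have hmemN : ∀ K, K ∈ N ↔ K ∈ W1 ∧ K ≠ X := by
    intro K
    rw [hNdef, Finset.mem_erase]
    exact and_comm
  have hmemW2 : ∀ K, K ∈ W2 ↔ K = Y ∨ (K ∈ W1 ∧ K ≠ X) := by
    intro K
    rw [hW2def, Finset.mem_insert, hmemN]
  have hMVp : ∀ K ∈ MV, K ≠ X → p ∉ K := by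
    intro K hK hKX hpK
    rcases (hmemMV K).1 hK with h | h | ⟨A, hA, h⟩
    · have hd := hFdisj K h X hXF hKX
      have hyy : p ∈ K ∩ X := Finset.mem_inter.2 ⟨hpK, hpX⟩
      rw [hd] at hyy
      exact absurd hyy (Finset.notMem_empty _)
    · exact (Finset.mem_erase.1 (hMXsub K h hpK)).1 rfl
    · have hAF : A ∈ F := Finset.mem_of_mem_erase hA
      have hd := hFdisj A hAF X hXF (Finset.mem_erase.1 hA).1
      have hyy : p ∈ A ∩ X := Finset.mem_inter.2 ⟨hsubA A hA K h hpK, hpX⟩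
      rw [hd] at hyy
      exact absurd hyy (Finset.notMem_empty _)
  have hMVVp : ∀ K ∈ MV, K ≠ X → K ⊆ V.erase p := by
    intro K hK hKX z hz
    exact Finset.mem_erase.2 ⟨fun h => hMVp K hK hKX (h ▸ hz), hMVV K hK hz⟩
  have hYW1 : Y ∉ W1 := by
    intro h
    rcases (hmemW1 Y).1 h with h' | h'
    · exact r3 Y h' hYssV
    · exact hq_notMV Y h' hqY
  have hXW1 : X ∈ W1 := hFW1 X hXF
  have hXnotW2 : ∀ K ∈ MX, K ≠ X :=
    fun K hK hE => (Finset.mem_erase.1 (hMXsub K hK (hE ▸ hpX))).1 rfl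
  have hW2B : ∀ K ∈ W2, K ∈ B ∧ K ≠ S := by
    intro K hK
    rcases (hmemW2 K).1 hK with rfl | ⟨h, _⟩
    · exact ⟨hYB, hYneS⟩
    · exact hW1B K h
  -- compatibility of Y with the others
  have hYcompat : ∀ K ∈ W1, K ≠ X → K ⊆ Y ∨ Y ⊆ K ∨ K ∩ Y = ∅ := by
    intro K hK hKX
    rcases (hmemW1 K).1 hK with h | h
    · rcases r4 K h with hc | hc
      · exact Or.inr (Or.inl (hYV.trans hc))
      · refine Or.inr (Or.inr (Finset.subset_empty.1 ?_))
        exact hc ▸ Finset.inter_subset_inter (Finset.Subset.refl K) hYV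
    · by_cases hKY : (K ∩ Y).Nonempty
      · exact Or.inl (hgoodY K (hMVfacts K h).1 (hMVVp K h hKX) hKY)
      · exact Or.inr (Or.inr (Finset.not_nonempty_iff_eq_empty.1 hKY))
  have hcompatW2 : ∀ K ∈ W2, ∀ L ∈ W2, K ⊆ L ∨ L ⊆ K ∨ K ∩ L = ∅ := by
    intro K hK L hL
    rcases (hmemW2 K).1 hK with rfl | ⟨h, hKX⟩ <;>
      rcases (hmemW2 L).1 hL with rfl | ⟨h', hLX⟩
    · exact Or.inl (Finset.Subset.refl _)
    · rcases hYcompat L h' hLX with hc | hc | hc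
      · exact Or.inr (Or.inl hc)
      · exact Or.inl hc
      · exact Or.inr (Or.inr (by rw [Finset.inter_comm]; exact hc))
    · exact hYcompat K h hKX
    · exact hcompatW1 K h L h'
  -- shared coverage fact at level V with private p
  have hcovVp : ∀ K ∈ B, K ⊆ V.erase p → ∃ K' ∈ W2, K' ⊂ V ∧ K ⊆ K' := by
    intro K hKB hKe
    by_cases hKY : (K ∩ Y).Nonempty
    · exact ⟨Y, (hmemW2 Y).2 (Or.inl rfl), hYssV, hgoodY K hKB hKe hKY⟩
    · have hKYe : K ∩ Y = ∅ := Finset.not_nonempty_iff_eq_empty.1 hKY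
      have hqK : q ∉ K := by
        intro hq'
        have hyy : q ∈ K ∩ Y := Finset.mem_inter.2 ⟨hq', hqY⟩
        rw [hKYe] at hyy
        exact absurd hyy (Finset.notMem_empty _)
      have hKeq : K ⊆ V.erase q := fun z hz => Finset.mem_erase.2
        ⟨fun hzq => hqK (hzq ▸ hz), (Finset.erase_subset _ _) (hKe hz)⟩
      obtain ⟨A, hAF, hKA⟩ := exists_max_restrict hB hKB hKeq
      by_cases hAX : A = X
      · subst hAX
        have hKXe : K ⊆ A.erase p := fun z hz => Finset.mem_erase.2
          ⟨(Finset.mem_erase.1 (hKe hz)).1, hKA hz⟩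
        obtain ⟨K', hK', hKK'⟩ := hMXcov K hKB hKXe
        refine ⟨K', (hmemW2 K').2 (Or.inr ⟨hMXW1 K' hK', hXnotW2 K' hK'⟩), ?_, hKK'⟩
        exact Finset.ssubset_of_subset_of_ssubset (hMXsubX K' hK') hXssV
      · exact ⟨A, (hmemW2 A).2 (Or.inr ⟨hFW1 A hAF, hAX⟩), hFltV A hAF, hKA⟩
  -- P1 for W2
  have hP1W2 : ∀ L, (L ∈ W2 ∨ L = S) → P1cond B W2 L := by
    intro L hLmem
    rcases hLmem with hLW | rfl
    · rcases (hmemW2 L).1 hLW with hLY | ⟨hLW1, hLX⟩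
      · -- L = Y
        obtain rfl := hLY.symm
        refine ⟨q, hqY, ?_, ?_⟩
        · intro K hK hKL
          rcases (hmemW2 K).1 hK with rfl | ⟨h, hKX⟩
          · exact absurd hKL (ssubset_irrefl _)
          · rcases (hmemW1 K).1 h with h' | h'
            · exact absurd (Finset.ssubset_of_ssubset_of_subset hKL hYV) (r3 K h')
            · exact fun hqK => hq_notMV K h' hqK
        · intro K hKB hKe
          have hKY : K ⊆ Y := hKe.trans (Finset.erase_subset _ _)
          have hKVq : K ⊆ V.erase q := fun z hz => Finset.mem_erase.2
            ⟨(Finset.mem_erase.1 (hKe hz)).1, hYV (hKY hz)⟩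
          have hKne : K.Nonempty := mem_B_nonempty hB hKB
          obtain ⟨A, hAF, hKA⟩ := exists_max_restrict hB hKB hKVq
          by_cases hAX : A = X
          · subst hAX
            have hpK : p ∉ K := fun hp' => hpY (hKY hp')
            have hKXe : K ⊆ A.erase p := fun z hz => Finset.mem_erase.2
              ⟨fun hzp => hpK (hzp ▸ hz), hKA hz⟩
            obtain ⟨K', hK', hKK'⟩ := hMXcov K hKB hKXe
            have hK'B : K' ∈ B := (hMXa K' hK').1
            have hK'Y : K' ⊆ Y := by
              apply hgoodY K' hK'B
              · intro z hz
                exact Finset.mem_erase.2 ⟨(Finset.mem_erase.1 (hMXsub K' hK' hz)).1,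
                  hXV (hMXsubX K' hK' hz)⟩
              · exact hKne.mono (Finset.subset_inter hKK' hKY)
            refine ⟨K', (hmemW2 K').2 (Or.inr ⟨hMXW1 K' hK', hXnotW2 K' hK'⟩), ?_, hKK'⟩
            refine Finset.ssubset_iff_subset_ne.2 ⟨hK'Y, ?_⟩
            exact fun hE => hqX (hMXsubX K' hK' (hE ▸ hqY))
          · have hAY : A ⊆ Y := by
              apply hgoodY A (hFfacts A hAF).1 (hMVVp A ((hmemMV A).2 (Or.inl hAF)) hAX)
              exact hKne.mono (Finset.subset_inter hKA hKY)
            refine ⟨A, (hmemW2 A).2 (Or.inr ⟨hFW1 A hAF, hAX⟩), ?_, hKA⟩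
            refine Finset.ssubset_iff_subset_ne.2 ⟨hAY, ?_⟩
            intro hE
            exact (Finset.mem_erase.1 ((hFfacts A hAF).2 (hE ▸ hqY))).1 rfl
      · -- L ∈ N
        rcases (hmemW1 L).1 hLW1 with hLMch | hLMV
        · by_cases hLV : L = V
          · subst hLV
            refine ⟨p, hpV, ?_, ?_⟩
            · intro K hK hKV
              rcases (hmemW2 K).1 hK with rfl | ⟨h, hKX⟩
              · exact hpY
              · rcases (hmemW1 K).1 h with h' | h'
                · exact absurd hKV (r3 K h')
                · exact fun hpK => hMVp K h' hKX hpK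
            · intro K hKB hKe
              exact hcovVp K hKB hKe
          · obtain ⟨y, hyL, hyV, hy1, hy2⟩ := r5 L hLMch hLV
            refine ⟨y, hyL, ?_, ?_⟩
            · intro K hK hKL
              rcases (hmemW2 K).1 hK with rfl | ⟨h, hKX⟩
              · exact fun hyK => hyV (hYV hyK)
              · rcases (hmemW1 K).1 h with h' | h'
                · exact hy1 K h' hKL
                · exact fun hyK => hyV (hMVV K h' hyK)
            · intro K hKB hKe
              obtain ⟨K', hK', hK'L, hKK'⟩ := hy2 K hKB hKe
              refine ⟨K', (hmemW2 K').2 (Or.inr ⟨hMchW1 K' hK', ?_⟩), hK'L, hKK'⟩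
              exact fun hE => hXnotMch (hE ▸ hK')
        · rcases (hmemMV L).1 hLMV with hLF | hLMX | ⟨A, hA, hLMf⟩
          · -- L ∈ F, L ≠ X
            have hLD : L ∈ D := Finset.mem_erase.2 ⟨hLX, hLF⟩
            refine ⟨xf L hLD, hxf L hLD, ?_, ?_⟩
            · intro K hK hKL
              rcases (hmemW2 K).1 hK with rfl | ⟨h, hKX⟩
              · exact absurd ((Finset.mem_erase.1 ((hFfacts L hLF).2 (hKL.1 hqY))).1) (by simp)
              · rcases (hmemW1 K).1 h with h' | h'
                · exact absurd (Finset.ssubset_of_ssubset_of_subset hKL (hFltV L hLF).1)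
                    (r3 K h')
                · rcases (hmemMV K).1 h' with h'' | h'' | ⟨A', hA', h''⟩
                  · intro hxK
                    have hd := hFdisj K h'' L hLF (fun hE => (ssubset_irrefl L) (hE ▸ hKL))
                    have hyy : xf L hLD ∈ K ∩ L := Finset.mem_inter.2 ⟨hxK, hxf L hLD⟩
                    rw [hd] at hyy
                    exact absurd hyy (Finset.notMem_empty _)
                  · intro hxK
                    have hd := hFdisj X hXF L hLF (fun hE => hLX hE.symm)
                    have hyy : xf L hLD ∈ X ∩ L :=
                      Finset.mem_inter.2 ⟨hMXsubX K h'' hxK, hxf L hLD⟩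
                    rw [hd] at hyy
                    exact absurd hyy (Finset.notMem_empty _)
                  · by_cases hAL : A' = L
                    · subst hAL
                      exact fun hxK => (Finset.mem_erase.1 ((hsub1 A' hA' K h'').2 hxK)).1 rfl
                    · intro hxK
                      have hA'F : A' ∈ F := Finset.mem_of_mem_erase hA'
                      have hd := hFdisj A' hA'F L hLF hAL
                      have hyy : xf L hLD ∈ A' ∩ L :=
                        Finset.mem_inter.2 ⟨hsubA A' hA' K h'' hxK, hxf L hLD⟩
                      rw [hd] at hyy
                      exact absurd hyy (Finset.notMem_empty _)
            · intro K hKB hKe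
              obtain ⟨K', hK', hKK'⟩ := (hMf L hLD).2.2.2 K hKB hKe
              have hK'X : K' ≠ X := by
                intro hE
                have hd := hFdisj L hLF X hXF hLX
                have hyy : p ∈ L ∩ X := Finset.mem_inter.2
                  ⟨hsubA L hLD K' hK' (hE ▸ hpX), hpX⟩
                rw [hd] at hyy
                exact absurd hyy (Finset.notMem_empty _)
              refine ⟨K', (hmemW2 K').2 (Or.inr ⟨hMfW1 L hLD K' hK', hK'X⟩), ?_, hKK'⟩
              exact Finset.ssubset_of_subset_of_ssubset ((hsub1 L hLD K' hK').2)
                (Finset.erase_ssubset (hxf L hLD))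
          · -- L ∈ MX
            obtain ⟨y, hyL, hy1, hy2⟩ := hMXp1 L hLMX
            have hLXe : L ⊆ X.erase p := hMXsub L hLMX
            have hLssX : L ⊂ X :=
              Finset.ssubset_of_subset_of_ssubset hLXe (Finset.erase_ssubset hpX)
            refine ⟨y, hyL, ?_, ?_⟩
            · intro K hK hKL
              rcases (hmemW2 K).1 hK with rfl | ⟨h, hKX⟩
              · exact absurd (hKL.1.trans hLssX.1) hYX
              · have hKX' : K ⊆ X := hKL.1.trans hLssX.1
                rcases (hmemW1 K).1 h with h' | h'
                · exact absurd (Finset.ssubset_of_ssubset_of_subset hKL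
                    (hLssX.1.trans hXV)) (r3 K h')
                · rcases (hmemMV K).1 h' with h'' | h'' | ⟨A', hA', h''⟩
                  · intro hyK
                    have hd := hFdisj K h'' X hXF hKX
                    have hyy : y ∈ K ∩ X := Finset.mem_inter.2 ⟨hyK, hKX' hyK⟩
                    rw [hd] at hyy
                    exact absurd hyy (Finset.notMem_empty _)
                  · exact hy1 K h'' hKL
                  · intro hyK
                    have hA'F : A' ∈ F := Finset.mem_of_mem_erase hA'
                    have hd := hFdisj A' hA'F X hXF (Finset.mem_erase.1 hA').1
                    have hyy : y ∈ A' ∩ X :=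
                      Finset.mem_inter.2 ⟨hsubA A' hA' K h'' hyK, hKX' hyK⟩
                    rw [hd] at hyy
                    exact absurd hyy (Finset.notMem_empty _)
            · intro K hKB hKe
              obtain ⟨K', hK', hK'L, hKK'⟩ := hy2 K hKB hKe
              exact ⟨K', (hmemW2 K').2 (Or.inr ⟨hMXW1 K' hK', hXnotW2 K' hK'⟩), hK'L, hKK'⟩
          · -- L ∈ Mf A
            have hAF : A ∈ F := Finset.mem_of_mem_erase hA
            have hAX : A ≠ X := (Finset.mem_erase.1 hA).1
            obtain ⟨y, hyL, hy1, hy2⟩ := (hMf A hA).2.2.1 L hLMf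
            have hLA : L ⊆ A := hsubA A hA L hLMf
            refine ⟨y, hyL, ?_, ?_⟩
            · intro K hK hKL
              rcases (hmemW2 K).1 hK with rfl | ⟨h, hKX⟩
              · exact absurd ((Finset.mem_erase.1
                  ((hFfacts A hAF).2 (hLA (hKL.1 hqY)))).1) (by simp)
              · have hKA : K ⊆ A := hKL.1.trans hLA
                rcases (hmemW1 K).1 h with h' | h'
                · exact absurd (Finset.ssubset_of_ssubset_of_subset hKL
                    (hLA.trans (hFltV A hAF).1)) (r3 K h')
                · rcases (hmemMV K).1 h' with h'' | h'' | ⟨A', hA', h''⟩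
                  · by_cases hKA' : K = A
                    · subst hKA'
                      exact absurd (Finset.ssubset_of_ssubset_of_subset hKL hLA)
                        (ssubset_irrefl _)
                    · intro hyK
                      have hd := hFdisj K h'' A hAF hKA'
                      have hyy : y ∈ K ∩ A := Finset.mem_inter.2 ⟨hyK, hKA hyK⟩
                      rw [hd] at hyy
                      exact absurd hyy (Finset.notMem_empty _)
                  · intro hyK
                    have hd := hFdisj X hXF A hAF (fun hE => hAX hE.symm)
                    have hyy : y ∈ X ∩ A := Finset.mem_inter.2 ⟨hMXsubX K h'' hyK, hKA hyK⟩
                    rw [hd] at hyy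
                    exact absurd hyy (Finset.notMem_empty _)
                  · by_cases hAA' : A' = A
                    · subst hAA'
                      exact hy1 K h'' hKL
                    · intro hyK
                      have hA'F : A' ∈ F := Finset.mem_of_mem_erase hA'
                      have hd := hFdisj A' hA'F A hAF hAA'
                      have hyy : y ∈ A' ∩ A :=
                        Finset.mem_inter.2 ⟨hsubA A' hA' K h'' hyK, hKA hyK⟩
                      rw [hd] at hyy
                      exact absurd hyy (Finset.notMem_empty _)
            · intro K hKB hKe
              obtain ⟨K', hK', hK'L, hKK'⟩ := hy2 K hKB hKe
              have hK'X : K' ≠ X := by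
                intro hE
                have hd := hFdisj A hAF X hXF hAX
                have hyy : p ∈ A ∩ X := Finset.mem_inter.2
                  ⟨hsubA A hA K' hK' (hE ▸ hpX), hpX⟩
                rw [hd] at hyy
                exact absurd hyy (Finset.notMem_empty _)
              exact ⟨K', (hmemW2 K').2 (Or.inr ⟨hMfW1 A hA K' hK', hK'X⟩), hK'L, hKK'⟩
    · -- L = S
      by_cases hVSeq : V = S
      · refine ⟨p, hpS, ?_, ?_⟩
        · intro K hK _
          rcases (hmemW2 K).1 hK with rfl | ⟨h, hKX⟩
          · exact hpY
          · rcases (hmemW1 K).1 h with h' | h'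
            · rw [rS hVSeq] at h'
              exact absurd h' (Finset.notMem_empty _)
            · exact fun hpK => hMVp K h' hKX hpK
        · intro K hKB hKe
          rw [← hVSeq] at hKe
          obtain ⟨K', hK', hK'V, hKK'⟩ := hcovVp K hKB hKe
          exact ⟨K', hK', hVSeq ▸ hK'V, hKK'⟩
      · obtain ⟨hVMch, hx₀V, hx₀S, hcov⟩ := rV hVSeq
        refine ⟨x₀, hx₀S, ?_, ?_⟩
        · intro K hK _
          rcases (hmemW2 K).1 hK with rfl | ⟨h, hKX⟩
          · exact fun hxK => hx₀V (hYV hxK)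
          · rcases (hmemW1 K).1 h with h' | h'
            · exact fun hxK => (Finset.mem_erase.1 ((r1 K h').2 hxK)).1 rfl
            · exact fun hxK => hx₀V (hMVV K h' hxK)
        · intro K hKB hKe
          obtain ⟨K', hK', hKK'⟩ := hcov K hKB hKe
          refine ⟨K', (hmemW2 K').2 (Or.inr ⟨hMchW1 K' hK',
            fun hE => hXnotMch (hE ▸ hK')⟩), ?_, hKK'⟩
          exact Finset.ssubset_of_subset_of_ssubset ((r1 K' hK').2)
            (Finset.erase_ssubset hx₀S)
  have hGoodW2 : GoodW S B W2 := ⟨hW2B, hcompatW2, hP1W2⟩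
  -- ## Conclusion
  have hMaxW1 : MaxNested B W1 := goodW_maxNested hB hconn hGoodW1
  have hMaxW2 : MaxNested B W2 := goodW_maxNested hB hconn hGoodW2
  have hNestedN : IsNested B N :=
    isNested_subset (goodW_isNested hB hconn hGoodW1) (Finset.erase_subset X W1)
  have hinsX : insert X N = W1 := by
    rw [hNdef]
    exact Finset.insert_erase hXW1
  -- the components of X ∩ Y all lie in N
  have hFCN : ∀ E ∈ Bmax (restrict B (X ∩ Y)), E ∈ N := by
    intro E hE
    have hEB : E ∈ B := (decomp_mem hE).1
    have hEC : E ⊆ X ∩ Y := (decomp_mem hE).2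
    have hEX : E ⊆ X := hEC.trans Finset.inter_subset_left
    have hEY : E ⊆ Y := hEC.trans Finset.inter_subset_right
    have hpE : p ∉ E := fun h => hpY (hEY h)
    have hEXe : E ⊆ X.erase p := fun z hz =>
      Finset.mem_erase.2 ⟨fun hzp => hpE (hzp ▸ hz), hEX hz⟩
    obtain ⟨K', hK', hEK'⟩ := hMXcov E hEB hEXe
    have hK'B : K' ∈ B := (hMXa K' hK').1
    have hK'MV : K' ∈ MV := (hmemMV K').2 (Or.inr (Or.inl hK'))
    have hK'Y : K' ⊆ Y := hgoodY K' hK'B (hMVVp K' hK'MV (hXnotW2 K' hK'))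
      ((mem_B_nonempty hB hEB).mono (Finset.subset_inter hEK' hEY))
    have hK'C : K' ⊆ X ∩ Y := Finset.subset_inter (hMXsubX K' hK') hK'Y
    have hEeq : E = K' := decomp_max hE K' hK'B hK'C hEK'
    rw [hEeq]
    exact (hmemN K').2 ⟨hMXW1 K' hK', hXnotW2 K' hK'⟩
  have hCS : X ∩ Y ⊆ S := (Finset.inter_subset_left).trans hXS
  have hk2 : 2 ≤ (Bmax (restrict B (X ∩ Y))).card := decomp_two hB hCS hXYne hXYB
  have huni := eSet_union_inter n X Y
  refine ⟨N, hNestedN, X, hXB, Y, hYB, fun hE => hqX (hE ▸ hqY), hXneS, hYneS,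
    by rw [hinsX]; exact hMaxW1, by rw [← hW2def]; exact hMaxW2, ?_⟩
  by_cases hVSeq : V = S
  · -- V = S : use only the components of X ∩ Y
    have hk3 : 3 ≤ (Bmax (restrict B (X ∩ Y))).card := by
      rcases hlast with h | h
      · exact absurd (hVdef ▸ hVSeq) h
      · exact h
    refine ⟨fun J => if J ∈ Bmax (restrict B (X ∩ Y)) then (-1 : ℤ) else 0, ?_, ?_⟩
    · show eSet n X + eSet n Y + ∑ J ∈ N,
          (↑(if J ∈ Bmax (restrict B (X ∩ Y)) then (-1 : ℤ) else 0) : ℝ) • eSet n J = 0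
      have hsum : ∑ J ∈ N,
          (↑(if J ∈ Bmax (restrict B (X ∩ Y)) then (-1 : ℤ) else 0) : ℝ) • eSet n J
          = -(eSet n (X ∩ Y)) := by
        rw [← Finset.sum_subset (fun E hE => hFCN E hE)
          (fun x _ hx => by rw [if_neg hx]; simp)]
        have h1 : ∑ J ∈ Bmax (restrict B (X ∩ Y)),
            (↑(if J ∈ Bmax (restrict B (X ∩ Y)) then (-1 : ℤ) else 0) : ℝ) • eSet n J
            = ∑ J ∈ Bmax (restrict B (X ∩ Y)), -(eSet n J) :=
          Finset.sum_congr rfl (fun J hJ => by rw [if_pos hJ]; simp)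
        rw [h1, Finset.sum_neg_distrib, eSet_decomp hB hCS n]
      rw [hsum]
      have h0 : eSet n (X ∪ Y) = 0 := by
        rw [← hVdef, hVSeq, hSdef]
        exact eSet_full n
      rw [h0] at huni
      rw [← huni]
      abel
    · show 2 + ∑ J ∈ N, (if J ∈ Bmax (restrict B (X ∩ Y)) then (-1 : ℤ) else 0) ≤ -1
      have hsum : ∑ J ∈ N, (if J ∈ Bmax (restrict B (X ∩ Y)) then (-1 : ℤ) else 0)
          = -(((Bmax (restrict B (X ∩ Y))).card : ℤ)) := by
        rw [← Finset.sum_subset (fun E hE => hFCN E hE)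
          (fun x _ hx => by rw [if_neg hx])]
        rw [Finset.sum_congr rfl (fun J hJ => if_pos hJ), Finset.sum_const]
        simp
      rw [hsum]
      have : (3 : ℤ) ≤ ((Bmax (restrict B (X ∩ Y))).card : ℤ) := by exact_mod_cast hk3
      omega
  · -- V ≠ S : use V together with the components of X ∩ Y
    obtain ⟨hVMch, hx₀V, hx₀S, _⟩ := rV hVSeq
    have hVN : V ∈ N := (hmemN V).2 ⟨hMchW1 V hVMch, fun hE => hqX (hE ▸ hqV)⟩
    have hVnotFC : V ∉ Bmax (restrict B (X ∩ Y)) := by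
      intro h
      exact hXY (hXV.trans (((decomp_mem h).2).trans Finset.inter_subset_right))
    set RS : Finset (Finset ℕ) := insert V (Bmax (restrict B (X ∩ Y))) with hRSdef
    have hRSN : RS ⊆ N := by
      rw [hRSdef]
      exact Finset.insert_subset hVN (fun E hE => hFCN E hE)
    refine ⟨fun J => if J ∈ RS then (-1 : ℤ) else 0, ?_, ?_⟩
    · show eSet n X + eSet n Y + ∑ J ∈ N,
          (↑(if J ∈ RS then (-1 : ℤ) else 0) : ℝ) • eSet n J = 0
      have hsum : ∑ J ∈ N, (↑(if J ∈ RS then (-1 : ℤ) else 0) : ℝ)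
          • eSet n J = -(eSet n V + eSet n (X ∩ Y)) := by
        rw [← Finset.sum_subset hRSN (fun x _ hx => by rw [if_neg hx]; simp)]
        have h1 : ∑ J ∈ RS, (↑(if J ∈ RS then (-1 : ℤ) else 0) : ℝ) • eSet n J
            = ∑ J ∈ RS, -(eSet n J) :=
          Finset.sum_congr rfl (fun J hJ => by rw [if_pos hJ]; simp)
        rw [h1, Finset.sum_neg_distrib, hRSdef, Finset.sum_insert hVnotFC,
          eSet_decomp hB hCS n]
      rw [hsum]
      have hVXY : eSet n V = eSet n (X ∪ Y) := by rw [hVdef]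
      rw [hVXY, ← huni]
      abel
    · show 2 + ∑ J ∈ N, (if J ∈ RS then (-1 : ℤ) else 0) ≤ -1
      have hsum : ∑ J ∈ N, (if J ∈ RS then (-1 : ℤ) else 0) = -((RS.card : ℤ)) := by
        rw [← Finset.sum_subset hRSN (fun x _ hx => by rw [if_neg hx])]
        rw [Finset.sum_congr rfl (fun J hJ => if_pos hJ), Finset.sum_const]
        simp
      rw [hsum]
      have hcard : RS.card = (Bmax (restrict B (X ∩ Y))).card + 1 := by
        rw [hRSdef, Finset.card_insert_of_notMem hVnotFC]
      rw [hcard]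
      have : (2 : ℤ) ≤ ((Bmax (restrict B (X ∩ Y))).card : ℤ) := by exact_mod_cast hk2
      push_cast
      omega
end Building
end

section
/- Let B be a connected building set on S and let I_1, I_2 ∈ B with I_1 ∩ I_2 ≠ ∅, I_1 ⊄ I_2, I_2 ⊄ I_1 and |I_1 △ I_2| ≥ 3. Suppose i_1 ∈ I_1 \ I_2, i_2 ∈ I_2 \ I_1, N is a maximal nested set of B|_{I_1 ∩ I_2}, and N′ is a maximal nested set of B|_{(I_1 △ I_2) \ {i_1, i_2}}, such that for some k ∈ {1, 2} the set {I_k} ∪ N ∪ (B|_{I_1 ∩ I_2})_max ∪ N′ ∪ (B|_{(I_1 △ I_2) \ {i_1, i_2}})_max is not a nested set of B. Then there exist I′_1, I′_2 ∈ B with I′_1 ⊇ I_1, I′_2 ⊇ I_2, i_1 ∈ I′_1 \ I′_2, i_2 ∈ I′_2 \ I′_1, I′_1 ∩ I′_2 ⊋ I_1 ∩ I_2 and I′_1 ∪ I′_2 = I_1 ∪ I_2. -/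
-- Auxiliary lemmas

lemma restrict_mem {B : Finset (Finset ℕ)} {C I : Finset ℕ} (h : I ∈ restrict B C) :
    I ∈ B ∧ I ⊆ C := Finset.mem_filter.mp h

lemma restrict_closed {S : Finset ℕ} {B : Finset (Finset ℕ)} (hB : IsBuilding S B)
    (C : Finset ℕ) : ∀ I ∈ restrict B C, ∀ J ∈ restrict B C,
      (I ∩ J).Nonempty → I ∪ J ∈ restrict B C := by
  intro I hI J hJ hIJ
  obtain ⟨hIB, hIC⟩ := restrict_mem hI
  obtain ⟨hJB, hJC⟩ := restrict_mem hJ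
  exact Finset.mem_filter.mpr ⟨hB.2.1 I hIB J hJB hIJ, Finset.union_subset hIC hJC⟩

lemma mem_of_bmax {A : Finset (Finset ℕ)} {M : Finset ℕ} (h : M ∈ Bmax A) : M ∈ A :=
  (Finset.mem_filter.mp h).1

lemma max_absorb {S : Finset ℕ} {B : Finset (Finset ℕ)} (hB : IsBuilding S B)
    {C J M : Finset ℕ} (hJ : J ∈ restrict B C)
    (hM : M ∈ Bmax (restrict B C)) (hne : (J ∩ M).Nonempty) : J ⊆ M := by
  obtain ⟨hMA, hMmax⟩ := Finset.mem_filter.mp hM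
  have h1 : J ∪ M ∈ restrict B C := restrict_closed hB C J hJ M hMA hne
  have h2 : M = J ∪ M := hMmax _ h1 Finset.subset_union_right
  have h3 : J ⊆ J ∪ M := Finset.subset_union_left
  rwa [← h2] at h3

lemma max_disj {S : Finset ℕ} {B : Finset (Finset ℕ)} (hB : IsBuilding S B)
    {C M M' : Finset ℕ} (hM : M ∈ Bmax (restrict B C)) (hM' : M' ∈ Bmax (restrict B C))
    (h : (M ∩ M').Nonempty) : M = M' := by
  have h1 : M ⊆ M' := max_absorb hB (mem_of_bmax hM) hM' h
  exact (Finset.mem_filter.mp hM).2 _ (mem_of_bmax hM') h1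

lemma side_mem {B : Finset (Finset ℕ)} {C : Finset ℕ} {N : Finset (Finset ℕ)}
    (hN : IsNested (restrict B C) N) :
    ∀ J ∈ N ∪ Bmax (restrict B C), J ∈ restrict B C := by
  intro J hJ
  rcases Finset.mem_union.mp hJ with h | h
  · exact (Finset.mem_sdiff.mp (hN.1 h)).1
  · exact mem_of_bmax h

lemma side_nested {S : Finset ℕ} {B : Finset (Finset ℕ)} (hB : IsBuilding S B)
    {C : Finset ℕ} {N : Finset (Finset ℕ)} (hN : IsNested (restrict B C) N) :
    ∀ J ∈ N ∪ Bmax (restrict B C), ∀ K ∈ N ∪ Bmax (restrict B C),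
      J ⊆ K ∨ K ⊆ J ∨ J ∩ K = ∅ := by
  intro J hJ K hK
  rcases Finset.mem_union.mp hJ with hJ' | hJ' <;> rcases Finset.mem_union.mp hK with hK' | hK'
  · exact hN.2.1 J hJ' K hK'
  · by_cases h : (J ∩ K).Nonempty
    · exact Or.inl (max_absorb hB (side_mem hN J hJ) hK' h)
    · exact Or.inr (Or.inr (Finset.not_nonempty_iff_eq_empty.mp h))
  · by_cases h : (K ∩ J).Nonempty
    · exact Or.inr (Or.inl (max_absorb hB (side_mem hN K hK) hJ' h))
    · refine Or.inr (Or.inr ?_)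
      rw [Finset.inter_comm]
      exact Finset.not_nonempty_iff_eq_empty.mp h
  · by_cases h : (J ∩ K).Nonempty
    · exact Or.inl (le_of_eq (max_disj hB hJ' hK' h))
    · exact Or.inr (Or.inr (Finset.not_nonempty_iff_eq_empty.mp h))

lemma side_sup {S : Finset ℕ} {B : Finset (Finset ℕ)} (hB : IsBuilding S B)
    {C : Finset ℕ} {N : Finset (Finset ℕ)} (hN : IsNested (restrict B C) N) :
    ∀ F ⊆ N ∪ Bmax (restrict B C), 2 ≤ F.card →
      (∀ I ∈ F, ∀ J ∈ F, I ≠ J → I ∩ J = ∅) → F.sup id ∉ B := by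
  intro F hF hcard hdisj hUB
  have hsub : ∀ J ∈ F, J ∈ restrict B C := fun J hJ => side_mem hN J (hF hJ)
  have hUC : F.sup id ⊆ C := Finset.sup_le fun J hJ => (restrict_mem (hsub J hJ)).2
  have hUr : F.sup id ∈ restrict B C := Finset.mem_filter.mpr ⟨hUB, hUC⟩
  by_cases hM : ∃ M ∈ F, M ∈ Bmax (restrict B C)
  · obtain ⟨M, hMF, hMmax⟩ := hM
    have hMU : M ⊆ F.sup id := Finset.le_sup (f := id) hMF
    have heq : M = F.sup id := (Finset.mem_filter.mp hMmax).2 _ hUr hMU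
    obtain ⟨K, hKF, hKM⟩ := Finset.exists_mem_ne (s := F) (by omega) M
    have hK := hdisj K hKF M hMF hKM
    have hKsub : K ⊆ M := by
      rw [heq]; exact Finset.le_sup (f := id) hKF
    have hKne : K.Nonempty := (hB.1 K (restrict_mem (hsub K hKF)).1).2
    obtain ⟨x, hx⟩ := hKne
    have hmem : x ∈ K ∩ M := Finset.mem_inter.mpr ⟨hx, hKsub hx⟩
    rw [hK] at hmem
    exact absurd hmem (Finset.notMem_empty x)
  · push_neg at hM
    have hFN : F ⊆ N := by
      intro J hJ
      rcases Finset.mem_union.mp (hF hJ) with h | h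
      · exact h
      · exact absurd h (hM J hJ)
    exact (hN.2.2 F hFN hcard hdisj) hUr

lemma helper (S : Finset ℕ) (B : Finset (Finset ℕ))
    (hB : IsBuilding S B) (hconn : Bmax B = {S})
    (I₁ I₂ : Finset ℕ) (hI₁ : I₁ ∈ B) (hI₂ : I₂ ∈ B)
    (hint : (I₁ ∩ I₂).Nonempty) (h21 : ¬I₂ ⊆ I₁)
    (i₁ : ℕ) (hi₁ : i₁ ∈ I₁ \ I₂) (i₂ : ℕ) (hi₂ : i₂ ∈ I₂ \ I₁)
    (N N' : Finset (Finset ℕ))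
    (hN : MaxNested (restrict B (I₁ ∩ I₂)) N)
    (hN' : MaxNested (restrict B (((I₁ ∪ I₂) \ (I₁ ∩ I₂)) \ {i₁, i₂})) N')
    (hnot : ¬IsNested B (insert I₁ (N ∪ Bmax (restrict B (I₁ ∩ I₂)) ∪ N' ∪
        Bmax (restrict B (((I₁ ∪ I₂) \ (I₁ ∩ I₂)) \ {i₁, i₂}))))) :
    ∃ I'₁ ∈ B, ∃ I'₂ ∈ B, I₁ ⊆ I'₁ ∧ I₂ ⊆ I'₂ ∧
      i₁ ∈ I'₁ \ I'₂ ∧ i₂ ∈ I'₂ \ I'₁ ∧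
      I₁ ∩ I₂ ⊂ I'₁ ∩ I'₂ ∧ I'₁ ∪ I'₂ = I₁ ∪ I₂ := by
  set C := I₁ ∩ I₂ with hCdef
  set D := (((I₁ ∪ I₂) \ C) \ ({i₁, i₂} : Finset ℕ)) with hDdef
  set E := N ∪ Bmax (restrict B C) ∪ N' ∪ Bmax (restrict B D) with hEdef
  unfold IsNested at hnot
  obtain ⟨hi₁1, hi₁2⟩ := Finset.mem_sdiff.mp hi₁
  obtain ⟨hi₂2, hi₂1⟩ := Finset.mem_sdiff.mp hi₂
  have hCsub1 : C ⊆ I₁ := Finset.inter_subset_left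
  have hCsub2 : C ⊆ I₂ := Finset.inter_subset_right
  have hD : ∀ x ∈ D, (x ∈ I₁ ∪ I₂) ∧ x ∉ C ∧ x ≠ i₁ ∧ x ≠ i₂ := by
    intro x hx
    rw [hDdef] at hx
    simp only [Finset.mem_sdiff, Finset.mem_insert, Finset.mem_singleton, not_or] at hx
    tauto
  have hi₁C : i₁ ∉ C := fun h => hi₁2 (hCsub2 h)
  have hi₂C : i₂ ∉ C := fun h => hi₂1 (hCsub1 h)
  have hi₁D : i₁ ∉ D := fun h => (hD i₁ h).2.2.1 rfl
  have hi₂D : i₂ ∉ D := fun h => (hD i₂ h).2.2.2 rfl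
  have hCD : ∀ x, x ∈ C → x ∈ D → False := fun x h1 h2 => (hD x h2).2.1 h1
  have hne : ∀ J ∈ B, J.Nonempty := fun J h => (hB.1 J h).2
  have hsubS : ∀ J ∈ B, J ⊆ S := fun J h => (hB.1 J h).1
  have hclass : ∀ J ∈ E, J ∈ N ∪ Bmax (restrict B C) ∨ J ∈ N' ∪ Bmax (restrict B D) := by
    intro J hJ
    rcases Finset.mem_union.mp hJ with h | h
    · rcases Finset.mem_union.mp h with h' | h'
      · rcases Finset.mem_union.mp h' with h'' | h''
        · exact Or.inl (Finset.mem_union_left _ h'')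
        · exact Or.inl (Finset.mem_union_right _ h'')
      · exact Or.inr (Finset.mem_union_left _ h')
    · exact Or.inr (Finset.mem_union_right _ h)
  have hmemC : ∀ J ∈ N ∪ Bmax (restrict B C), J ∈ B ∧ J ⊆ C :=
    fun J h => restrict_mem (side_mem hN.1 J h)
  have hmemD : ∀ J ∈ N' ∪ Bmax (restrict B D), J ∈ B ∧ J ⊆ D :=
    fun J h => restrict_mem (side_mem hN'.1 J h)
  have hEB : ∀ J ∈ E, J ∈ B := by
    intro J hJ
    rcases hclass J hJ with h | h
    · exact (hmemC J h).1
    · exact (hmemD J h).1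
  have hP1 : insert I₁ E ⊆ B \ Bmax B := by
    intro J hJ
    rw [Finset.mem_sdiff, hconn, Finset.mem_singleton]
    rcases Finset.mem_insert.mp hJ with rfl | hJE
    · refine ⟨hI₁, fun h => h21 ?_⟩
      rw [h]
      exact hsubS I₂ hI₂
    · refine ⟨hEB J hJE, fun h => ?_⟩
      rcases hclass J hJE with hc | hc
      · have h1 : i₁ ∈ J := by rw [h]; exact hsubS I₁ hI₁ hi₁1
        exact hi₁C ((hmemC J hc).2 h1)
      · obtain ⟨c, hc'⟩ := hint
        have h1 : c ∈ J := by rw [h]; exact hsubS I₁ hI₁ (hCsub1 hc')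
        exact hCD c hc' ((hmemD J hc).2 h1)
  have bridge : ∀ J ∈ B, J ⊆ I₁ ∪ I₂ → i₁ ∉ J → i₂ ∉ J → (J ∩ I₁).Nonempty →
      (J ∩ I₂).Nonempty → ¬J ⊆ C → ∃ I'₁ ∈ B, ∃ I'₂ ∈ B, I₁ ⊆ I'₁ ∧ I₂ ⊆ I'₂ ∧
      i₁ ∈ I'₁ \ I'₂ ∧ i₂ ∈ I'₂ \ I'₁ ∧ C ⊂ I'₁ ∩ I'₂ ∧ I'₁ ∪ I'₂ = I₁ ∪ I₂ := by
    intro J hJB hJsub hJi₁ hJi₂ h1 h2 h3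
    have hm1 : I₁ ∪ J ∈ B := hB.2.1 I₁ hI₁ J hJB (by rwa [Finset.inter_comm] at h1)
    have hm2 : I₂ ∪ J ∈ B := hB.2.1 I₂ hI₂ J hJB (by rwa [Finset.inter_comm] at h2)
    refine ⟨I₁ ∪ J, hm1, I₂ ∪ J, hm2, Finset.subset_union_left, Finset.subset_union_left,
      ?_, ?_, ?_, ?_⟩
    · rw [Finset.mem_sdiff, Finset.mem_union, Finset.mem_union]
      exact ⟨Or.inl hi₁1, fun h => h.elim hi₁2 hJi₁⟩
    · rw [Finset.mem_sdiff, Finset.mem_union, Finset.mem_union]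
      exact ⟨Or.inl hi₂2, fun h => h.elim hi₂1 hJi₂⟩
    · rw [Finset.ssubset_def]
      constructor
      · intro x hx
        rw [hCdef, Finset.mem_inter] at hx
        rw [Finset.mem_inter, Finset.mem_union, Finset.mem_union]
        exact ⟨Or.inl hx.1, Or.inl hx.2⟩
      · intro hsub
        obtain ⟨x, hxJ, hxC⟩ := Finset.not_subset.mp h3
        have hx : x ∈ (I₁ ∪ J) ∩ (I₂ ∪ J) := Finset.mem_inter.mpr
          ⟨Finset.mem_union_right _ hxJ, Finset.mem_union_right _ hxJ⟩
        exact hxC (hsub hx)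
    · ext x
      simp only [Finset.mem_union]
      constructor
      · rintro ((h | h) | (h | h))
        · exact Or.inl h
        · exact Finset.mem_union.mp (hJsub h)
        · exact Or.inr h
        · exact Finset.mem_union.mp (hJsub h)
      · rintro (h | h)
        · exact Or.inl (Or.inl h)
        · exact Or.inr (Or.inl h)
  have hpairE : ∀ J ∈ E, ∀ K ∈ E, J ⊆ K ∨ K ⊆ J ∨ J ∩ K = ∅ := by
    intro J hJ K hK
    rcases hclass J hJ with hJ' | hJ' <;> rcases hclass K hK with hK' | hK'
    · exact side_nested hB hN.1 J hJ' K hK'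
    · refine Or.inr (Or.inr ?_)
      rw [Finset.eq_empty_iff_forall_notMem]
      intro x hx
      rw [Finset.mem_inter] at hx
      exact hCD x ((hmemC J hJ').2 hx.1) ((hmemD K hK').2 hx.2)
    · refine Or.inr (Or.inr ?_)
      rw [Finset.eq_empty_iff_forall_notMem]
      intro x hx
      rw [Finset.mem_inter] at hx
      exact hCD x ((hmemC K hK').2 hx.2) ((hmemD J hJ').2 hx.1)
    · exact side_nested hB hN'.1 J hJ' K hK'
  have hcross : ∀ K ∈ N' ∪ Bmax (restrict B D), ¬K ⊆ I₁ → (K ∩ I₁).Nonempty →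
      ∃ I'₁ ∈ B, ∃ I'₂ ∈ B, I₁ ⊆ I'₁ ∧ I₂ ⊆ I'₂ ∧
      i₁ ∈ I'₁ \ I'₂ ∧ i₂ ∈ I'₂ \ I'₁ ∧ C ⊂ I'₁ ∩ I'₂ ∧ I'₁ ∪ I'₂ = I₁ ∪ I₂ := by
    intro K hK hKI hKI1
    obtain ⟨hKB, hKD⟩ := hmemD K hK
    obtain ⟨x, hxK, hxI⟩ := Finset.not_subset.mp hKI
    have hxD := hD x (hKD hxK)
    have hxI₂ : x ∈ I₂ := by
      rcases Finset.mem_union.mp hxD.1 with h | h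
      · exact absurd h hxI
      · exact h
    refine bridge K hKB ?_ ?_ ?_ hKI1 ⟨x, Finset.mem_inter.mpr ⟨hxK, hxI₂⟩⟩ ?_
    · intro y hy
      exact (hD y (hKD hy)).1
    · intro h; exact hi₁D (hKD h)
    · intro h; exact hi₂D (hKD h)
    · intro h
      exact hxI (hCsub1 (h hxK))
  rcases not_and_or.mp hnot with h | h
  · exact absurd hP1 h
  rcases not_and_or.mp h with h2 | h3
  · -- a bad pair
    push_neg at h2
    obtain ⟨J, hJ, K, hK, hnJK, hnKJ, hne'⟩ := h2
    rcases Finset.mem_insert.mp hJ with rfl | hJE <;> rcases Finset.mem_insert.mp hK with h' | hKE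
    · rw [h'] at hnJK
      exact absurd subset_rfl hnJK
    · rcases hclass K hKE with hc | hc
      · exact absurd (fun x hx => hCsub1 ((hmemC K hc).2 hx)) hnKJ
      · refine hcross K hc hnKJ ?_
        rwa [Finset.inter_comm] at hne'
    · rw [h'] at hnJK hne'
      rcases hclass J hJE with hc | hc
      · exact absurd (fun x hx => hCsub1 ((hmemC J hc).2 hx)) hnJK
      · exact hcross J hc hnJK hne'
    · rcases hpairE J hJE K hKE with h | h | h
      exacts [absurd h hnJK, absurd h hnKJ, absurd h (Finset.nonempty_iff_ne_empty.mp hne')]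
  · -- a bad disjoint family
    push_neg at h3
    obtain ⟨F, hFsub, hcard, hdisj, hUB⟩ := h3
    by_cases hI₁F : I₁ ∈ F
    · -- I₁ belongs to the family
      have hF'E : ∀ K ∈ F.erase I₁, K ∈ E := by
        intro K hK
        rcases Finset.mem_insert.mp (hFsub (Finset.mem_of_mem_erase hK)) with h | h
        · exact absurd h (Finset.ne_of_mem_erase hK)
        · exact h
      have hF'ne : (F.erase I₁).Nonempty := by
        rw [← Finset.card_pos, Finset.card_erase_of_mem hI₁F]; omega
      have hdisj1 : ∀ K ∈ F.erase I₁, K ∩ I₁ = ∅ := fun K hK =>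
        hdisj K (Finset.mem_of_mem_erase hK) I₁ hI₁F (Finset.ne_of_mem_erase hK)
      have hF'D : ∀ K ∈ F.erase I₁, K ∈ B ∧ K ⊆ D := by
        intro K hK
        rcases hclass K (hF'E K hK) with hc | hc
        · exfalso
          obtain ⟨x, hx⟩ := hne K (hmemC K hc).1
          have hx2 : x ∈ K ∩ I₁ := Finset.mem_inter.mpr ⟨hx, hCsub1 ((hmemC K hc).2 hx)⟩
          rw [hdisj1 K hK] at hx2
          exact Finset.notMem_empty x hx2
        · exact hmemD K hc
      have hUeq : F.sup id = I₁ ∪ (F.erase I₁).sup id := by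
        conv_lhs => rw [← Finset.insert_erase hI₁F]
        rw [Finset.sup_insert]
        rfl
      have hVI₂ : ∀ x ∈ (F.erase I₁).sup id, x ∈ I₂ ∧ x ∉ I₁ ∧ x ≠ i₂ := by
        intro x hx
        obtain ⟨K, hK, hxK⟩ := Finset.mem_sup.mp hx
        obtain ⟨hKB, hKD⟩ := hF'D K hK
        have hxD := hD x (hKD hxK)
        have hxI₁ : x ∉ I₁ := by
          intro h
          have hx2 : x ∈ K ∩ I₁ := Finset.mem_inter.mpr ⟨hxK, h⟩
          rw [hdisj1 K hK] at hx2
          exact Finset.notMem_empty x hx2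
        have hxI₂ : x ∈ I₂ := by
          rcases Finset.mem_union.mp hxD.1 with h | h
          · exact absurd h hxI₁
          · exact h
        exact ⟨hxI₂, hxI₁, hxD.2.2.2⟩
      refine ⟨F.sup id, hUB, I₂, hI₂, ?_, subset_rfl, ?_, ?_, ?_, ?_⟩
      · rw [hUeq]; exact Finset.subset_union_left
      · rw [Finset.mem_sdiff]
        exact ⟨by rw [hUeq]; exact Finset.mem_union_left _ hi₁1, hi₁2⟩
      · rw [Finset.mem_sdiff]
        refine ⟨hi₂2, ?_⟩
        rw [hUeq, Finset.mem_union]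
        rintro (h | h)
        · exact hi₂1 h
        · exact (hVI₂ i₂ h).2.2 rfl
      · rw [Finset.ssubset_def]
        constructor
        · intro x hx
          rw [hCdef, Finset.mem_inter] at hx
          rw [Finset.mem_inter]
          exact ⟨by rw [hUeq]; exact Finset.mem_union_left _ hx.1, hx.2⟩
        · intro hsub
          obtain ⟨K, hK⟩ := hF'ne
          obtain ⟨x, hx⟩ := hne K (hF'D K hK).1
          have hxV : x ∈ (F.erase I₁).sup id := Finset.mem_sup.mpr ⟨K, hK, hx⟩
          obtain ⟨hxI₂, hxI₁, _⟩ := hVI₂ x hxV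
          have hxU : x ∈ F.sup id ∩ I₂ := Finset.mem_inter.mpr
            ⟨by rw [hUeq]; exact Finset.mem_union_right _ hxV, hxI₂⟩
          have hx2 := hsub hxU
          rw [hCdef, Finset.mem_inter] at hx2
          exact hxI₁ hx2.1
      · rw [hUeq]
        ext x
        simp only [Finset.mem_union]
        constructor
        · rintro ((h | h) | h)
          · exact Or.inl h
          · exact Or.inr (hVI₂ x h).1
          · exact Or.inr h
        · rintro (h | h)
          · exact Or.inl (Or.inl h)
          · exact Or.inr h
    · -- the family avoids I₁
      have hFE : ∀ K ∈ F, K ∈ E := by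
        intro K hK
        rcases Finset.mem_insert.mp (hFsub hK) with h | h
        · rw [h] at hK; exact absurd hK hI₁F
        · exact h
      by_cases hallC : ∀ K ∈ F, K ∈ N ∪ Bmax (restrict B C)
      · exact absurd hUB (side_sup hB hN.1 F hallC hcard hdisj)
      by_cases hallD : ∀ K ∈ F, K ∈ N' ∪ Bmax (restrict B D)
      · exact absurd hUB (side_sup hB hN'.1 F hallD hcard hdisj)
      push_neg at hallC hallD
      obtain ⟨K₀, hK₀F, hK₀⟩ := hallC
      obtain ⟨K₁, hK₁F, hK₁⟩ := hallD
      have hK₀D : K₀ ∈ B ∧ K₀ ⊆ D := by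
        rcases hclass K₀ (hFE K₀ hK₀F) with h | h
        · exact absurd h hK₀
        · exact hmemD K₀ h
      have hK₁C : K₁ ∈ B ∧ K₁ ⊆ C := by
        rcases hclass K₁ (hFE K₁ hK₁F) with h | h
        · exact hmemC K₁ h
        · exact absurd h hK₁
      obtain ⟨x, hx⟩ := hne K₁ hK₁C.1
      obtain ⟨y, hy⟩ := hne K₀ hK₀D.1
      have hxU : x ∈ F.sup id := Finset.mem_sup.mpr ⟨K₁, hK₁F, hx⟩
      have hyU : y ∈ F.sup id := Finset.mem_sup.mpr ⟨K₀, hK₀F, hy⟩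
      have hxC : x ∈ C := hK₁C.2 hx
      have hyD : y ∈ D := hK₀D.2 hy
      refine bridge (F.sup id) hUB ?_ ?_ ?_ ⟨x, Finset.mem_inter.mpr ⟨hxU, hCsub1 hxC⟩⟩
        ⟨x, Finset.mem_inter.mpr ⟨hxU, hCsub2 hxC⟩⟩ ?_
      · intro z hz
        obtain ⟨K, hK, hzK⟩ := Finset.mem_sup.mp hz
        rcases hclass K (hFE K hK) with h | h
        · exact Finset.mem_union_left _ (hCsub1 ((hmemC K h).2 hzK))
        · exact (hD z ((hmemD K h).2 hzK)).1
      · intro h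
        obtain ⟨K, hK, hiK⟩ := Finset.mem_sup.mp h
        rcases hclass K (hFE K hK) with h' | h'
        · exact hi₁C ((hmemC K h').2 hiK)
        · exact hi₁D ((hmemD K h').2 hiK)
      · intro h
        obtain ⟨K, hK, hiK⟩ := Finset.mem_sup.mp h
        rcases hclass K (hFE K hK) with h' | h'
        · exact hi₂C ((hmemC K h').2 hiK)
        · exact hi₂D ((hmemD K h').2 hiK)
      · intro h
        exact hCD y (h hyU) hyD

/-- Lemma: if the candidate nested set built from `I_k`, maximal nested sets of
`B|_{I₁ ∩ I₂}` and `B|_{(I₁ △ I₂) \ {i₁, i₂}}` and their components fails to be nested,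
then `I₁, I₂` can be enlarged keeping `i₁, i₂` separated, with strictly larger
intersection and the same union. -/
theorem stmt_3 (S : Finset ℕ) (hS : S.Nonempty) (B : Finset (Finset ℕ))
    (hB : IsBuilding S B) (hconn : Bmax B = {S})
    (I₁ I₂ : Finset ℕ) (hI₁ : I₁ ∈ B) (hI₂ : I₂ ∈ B)
    (hint : (I₁ ∩ I₂).Nonempty) (h12 : ¬I₁ ⊆ I₂) (h21 : ¬I₂ ⊆ I₁)
    (hdiff : 3 ≤ ((I₁ ∪ I₂) \ (I₁ ∩ I₂)).card)
    (i₁ : ℕ) (hi₁ : i₁ ∈ I₁ \ I₂) (i₂ : ℕ) (hi₂ : i₂ ∈ I₂ \ I₁)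
    (N N' : Finset (Finset ℕ))
    (hN : MaxNested (restrict B (I₁ ∩ I₂)) N)
    (hN' : MaxNested (restrict B (((I₁ ∪ I₂) \ (I₁ ∩ I₂)) \ {i₁, i₂})) N')
    (hnot : ¬IsNested B (insert I₁ (N ∪ Bmax (restrict B (I₁ ∩ I₂)) ∪ N' ∪
        Bmax (restrict B (((I₁ ∪ I₂) \ (I₁ ∩ I₂)) \ {i₁, i₂})))) ∨
      ¬IsNested B (insert I₂ (N ∪ Bmax (restrict B (I₁ ∩ I₂)) ∪ N' ∪
        Bmax (restrict B (((I₁ ∪ I₂) \ (I₁ ∩ I₂)) \ {i₁, i₂}))))) :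
    ∃ I'₁ ∈ B, ∃ I'₂ ∈ B, I₁ ⊆ I'₁ ∧ I₂ ⊆ I'₂ ∧
      i₁ ∈ I'₁ \ I'₂ ∧ i₂ ∈ I'₂ \ I'₁ ∧
      I₁ ∩ I₂ ⊂ I'₁ ∩ I'₂ ∧ I'₁ ∪ I'₂ = I₁ ∪ I₂ := by
  rcases hnot with h | h
  · exact helper S B hB hconn I₁ I₂ hI₁ hI₂ hint h21 i₁ hi₁ i₂ hi₂ N N' hN hN' h
  · have hint' : (I₂ ∩ I₁).Nonempty := by rwa [Finset.inter_comm]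
    have hN2 : MaxNested (restrict B (I₂ ∩ I₁)) N := by rwa [Finset.inter_comm]
    have hN'2 : MaxNested (restrict B (((I₂ ∪ I₁) \ (I₂ ∩ I₁)) \ {i₂, i₁})) N' := by
      rwa [Finset.inter_comm I₂ I₁, Finset.union_comm I₂ I₁, Finset.pair_comm i₂ i₁]
    have h2 : ¬IsNested B (insert I₂ (N ∪ Bmax (restrict B (I₂ ∩ I₁)) ∪ N' ∪
        Bmax (restrict B (((I₂ ∪ I₁) \ (I₂ ∩ I₁)) \ {i₂, i₁})))) := by
      rwa [Finset.inter_comm I₂ I₁, Finset.union_comm I₂ I₁, Finset.pair_comm i₂ i₁]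
    obtain ⟨I'₂, hI'₂B, I'₁, hI'₁B, hs₂, hs₁, hm₂, hm₁, hss, huu⟩ :=
      helper S B hB hconn I₂ I₁ hI₂ hI₁ hint' h12 i₂ hi₂ i₁ hi₁ N N' hN2 hN'2 h2
    refine ⟨I'₁, hI'₁B, I'₂, hI'₂B, hs₁, hs₂, hm₁, hm₂, ?_, ?_⟩
    · rwa [Finset.inter_comm I'₂ I'₁, Finset.inter_comm I₂ I₁] at hss
    · rw [Finset.union_comm I'₁ I'₂, huu, Finset.union_comm]
end
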